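/- arXiv:2103.14002 — 8 statements merged into one kernel-verified Lean document; each statement's English description precedes it below -/
import Mathlib

section
/- If α > 0, β > 0 and αβ = π, then √α · ∫₀^∞ e^{−x²}/cosh(αx) dx = √β · ∫₀^∞ e^{−x²}/cosh(βx) dx. -/
open Real MeasureTheory Complex Set

noncomputable def φ (y : ℝ) : ℝ := (1 + Real.exp (2*y))⁻¹

lemma φ_hasDeriv (y : ℝ) : HasDerivAt φ (-(Real.exp (2*y)*2) / (1 + Real.exp (2*y))^2) y := by
  have h1 : HasDerivAt (fun y : ℝ => 1 + Real.exp (2*y)) (Real.exp (2*y)*2) y := by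
    have := (Real.hasDerivAt_exp (2*y)).comp y ((hasDerivAt_id y).const_mul 2)
    simpa [mul_comm] using this.const_add 1
  have hne : (1 + Real.exp (2*y)) ≠ 0 := by positivity
  exact h1.inv hne

lemma φ_mem (y : ℝ) : φ y ∈ Ioo (0:ℝ) 1 := by
  constructor
  · have : (0:ℝ) < 1 + Real.exp (2*y) := by positivity
    exact inv_pos.mpr this
  · rw [φ, inv_lt_one_iff₀]
    right; nlinarith [Real.exp_pos (2*y)]

lemma φ_image : φ '' univ = Ioo (0:ℝ) 1 := by
  apply subset_antisymm
  · rintro t ⟨y, -, rfl⟩; exact φ_mem y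
  · rintro t ⟨ht0, ht1⟩
    refine ⟨Real.log ((1-t)/t) / 2, trivial, ?_⟩
    have h1 : (0:ℝ) < (1-t)/t := div_pos (by linarith) ht0
    rw [φ, mul_div_cancel₀ _ (two_ne_zero), Real.exp_log h1]
    field_simp
    ring

lemma φ_inj : InjOn φ univ := by
  intro a _ b _ h
  rw [φ, φ, inv_inj] at h
  have h2 : Real.exp (2*a) = Real.exp (2*b) := by linarith
  rw [Real.exp_eq_exp] at h2
  linarith

lemma cp_pos {x : ℝ} (hx : 0 < x) (w : ℂ) :
    (x:ℂ) ^ w = Complex.exp (↑(Real.log x) * w) := by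
  rw [Complex.cpow_def_of_ne_zero (by exact_mod_cast hx.ne'), Complex.ofReal_log hx.le]

lemma pointwise_subst (b : ℝ) (y : ℝ) :
    |(-(Real.exp (2*y)*2) / (1 + Real.exp (2*y))^2)| •
      (((φ y : ℂ)) ^ ((1+I*b)/2 - 1) * ((1:ℂ) - (φ y:ℂ)) ^ (-((1+I*b)/2)))
      = Complex.exp (-(I*b*y)) / (Real.cosh y : ℂ) := by
  have hE : 0 < Real.exp (2*y) := Real.exp_pos _
  have h1E : (0:ℝ) < 1 + Real.exp (2*y) := by positivity
  have hφ0 : 0 < φ y := (φ_mem y).1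
  have hφ1 : φ y < 1 := (φ_mem y).2
  have h1φ : (1:ℝ) - φ y = Real.exp (2*y)/(1 + Real.exp (2*y)) := by
    rw [φ]; field_simp; ring
  have lA : Real.log (φ y) = -Real.log (1 + Real.exp (2*y)) := by
    rw [φ, Real.log_inv]
  have lB : Real.log (1 - φ y) = 2*y - Real.log (1 + Real.exp (2*y)) := by
    rw [h1φ, Real.log_div hE.ne' h1E.ne', Real.log_exp]
  have hc : ((1:ℂ) - (φ y:ℂ)) = ((1 - φ y : ℝ) : ℂ) := by push_cast; ring
  rw [hc, cp_pos hφ0, cp_pos (by linarith : (0:ℝ) < 1 - φ y), ← Complex.exp_add, lA, lB]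
  have hexp : (↑(-Real.log (1 + Real.exp (2*y))) * ((1+I*b)/2 - 1) +
      ↑(2*y - Real.log (1 + Real.exp (2*y))) * (-((1+I*b)/2)))
      = ↑(Real.log (1 + Real.exp (2*y))) + ↑(-y) + -(I*b*y) := by
    push_cast; ring
  rw [hexp, Complex.exp_add, Complex.exp_add, ← Complex.ofReal_exp, ← Complex.ofReal_exp,
    Real.exp_log h1E]
  have habs : |(-(Real.exp (2*y)*2) / (1 + Real.exp (2*y))^2)|
      = Real.exp (2*y)*2 / (1 + Real.exp (2*y))^2 := by
    rw [abs_div, abs_neg, abs_of_pos (by positivity), abs_of_pos (by positivity)]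
  rw [habs]
  rw [Complex.real_smul]
  have hkey : (Real.exp (2*y)*2 / (1 + Real.exp (2*y))^2) * ((1 + Real.exp (2*y)) *
      Real.exp (-y)) = (Real.cosh y)⁻¹ := by
    have hu : Real.exp y ≠ 0 := (Real.exp_pos y).ne'
    rw [Real.cosh_eq, Real.exp_neg, show Real.exp (2*y) = Real.exp y * Real.exp y by
      rw [← Real.exp_add]; ring_nf]
    field_simp
    ring
  have hcosh0 : ((Real.cosh y : ℝ) : ℂ) ≠ 0 := by
    exact_mod_cast (Real.cosh_pos (x := y)).ne'
  rw [eq_div_iff hcosh0]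
  have h2 : (Real.exp (2*y)*2 / (1 + Real.exp (2*y))^2) * ((1 + Real.exp (2*y)) *
      Real.exp (-y)) * Real.cosh y = 1 := by
    rw [hkey]; exact inv_mul_cancel₀ (Real.cosh_pos (x := y)).ne'
  have h3 : ((Real.exp (2*y)*2 / (1 + Real.exp (2*y))^2 : ℝ) : ℂ) *
      (((1 + Real.exp (2*y) : ℝ) : ℂ) * ((Real.exp (-y) : ℝ) : ℂ)) *
      ((Real.cosh y : ℝ) : ℂ) = 1 := by
    exact_mod_cast congrArg (fun r : ℝ => (r : ℂ)) h2
  linear_combination Complex.exp (-(I*b*y)) * h3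

lemma subst_eq (b : ℝ) :
    (∫ t in Ioo (0:ℝ) 1, ((t:ℂ) ^ ((1+I*b)/2 - 1) * ((1:ℂ) - (t:ℂ)) ^ (-((1+I*b)/2))))
      = ∫ y : ℝ, Complex.exp (-(I*b*y)) / (Real.cosh y : ℂ) := by
  have h := integral_image_eq_integral_abs_deriv_smul (s := univ) MeasurableSet.univ
      (fun y _ => (φ_hasDeriv y).hasDerivWithinAt) φ_inj
      (fun t : ℝ => ((t:ℂ) ^ ((1+I*(b:ℂ))/2 - 1) * ((1:ℂ) - (t:ℂ)) ^ (-((1+I*(b:ℂ))/2))))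
  rw [φ_image] at h
  rw [h, MeasureTheory.setIntegral_univ]
  exact integral_congr_ae (.of_forall fun y => pointwise_subst b y)

lemma beta_eq (b : ℝ) :
    (∫ t in Ioo (0:ℝ) 1, ((t:ℂ) ^ ((1+I*b)/2 - 1) * ((1:ℂ) - (t:ℂ)) ^ (-((1+I*b)/2))))
      = ↑π / Complex.sin (π * ((1+I*b)/2)) := by
  set a : ℂ := (1+I*b)/2 with ha_def
  have ha : 0 < a.re := by
    rw [ha_def]
    simp [Complex.div_re]
  have hb' : 0 < ((1:ℂ) - a).re := by
    rw [ha_def]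
    simp [Complex.div_re, Complex.sub_re]
    norm_num
  have h1 := Complex.Gamma_mul_Gamma_eq_betaIntegral ha hb'
  have h2 : a + (1 - a) = 1 := by ring
  rw [h2, Complex.Gamma_one, one_mul] at h1
  rw [← Complex.Gamma_mul_Gamma_one_sub a, h1, Complex.betaIntegral]
  rw [intervalIntegral.integral_of_le zero_le_one, MeasureTheory.integral_Ioc_eq_integral_Ioo]
  congr 1
  ext t
  congr 2
  ring

lemma sin_eval (b : ℝ) : Complex.sin (π * ((1+I*b)/2)) = (Real.cosh (π*b/2) : ℂ) := by
  have : (π:ℂ) * ((1+I*b)/2) = ↑(π/2) + ↑(π*b/2) * I := by push_cast; ring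
  rw [this, Complex.sin_add, Complex.cos_mul_I, Complex.sin_mul_I]
  have h1 : Complex.sin ↑(π/2) = 1 := by
    rw [← Complex.ofReal_sin, Real.sin_pi_div_two, Complex.ofReal_one]
  have h2 : Complex.cos ↑(π/2) = 0 := by
    rw [← Complex.ofReal_cos, Real.cos_pi_div_two, Complex.ofReal_zero]
  rw [h1, h2, Complex.ofReal_cosh]
  ring

lemma inv_cosh_le_left {y : ℝ} : (Real.cosh y)⁻¹ ≤ 2 * Real.exp y := by
  rw [inv_le_comm₀ (Real.cosh_pos y) (by positivity), Real.cosh_eq]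
  have h1 : Real.exp (-y) = (Real.exp y)⁻¹ := Real.exp_neg y
  have h2 : (0:ℝ) < Real.exp y := Real.exp_pos y
  have h3 : (2*Real.exp y)⁻¹ = (Real.exp y)⁻¹ / 2 := by rw [mul_inv]; ring
  rw [h1, h3]
  linarith

lemma inv_cosh_le_right {y : ℝ} : (Real.cosh y)⁻¹ ≤ 2 * Real.exp (-y) := by
  have := inv_cosh_le_left (y := -y)
  rwa [Real.cosh_neg] at this

lemma integrable_inv_cosh : Integrable (fun y : ℝ => (Real.cosh y)⁻¹) := by
  have hmeas : AEStronglyMeasurable (fun y : ℝ => (Real.cosh y)⁻¹) volume :=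
    (Real.continuous_cosh.inv₀ (fun y => (Real.cosh_pos y).ne')).aestronglyMeasurable
  rw [← MeasureTheory.integrableOn_univ, ← Set.Iic_union_Ioi (a := (0:ℝ)),
    MeasureTheory.integrableOn_union]
  constructor
  · have hg : IntegrableOn (fun y : ℝ => 2 * Real.exp y) (Iic 0) :=
      (integrableOn_exp_Iic 0).const_mul 2
    refine hg.integrable.mono' hmeas.restrict ?_
    refine .of_forall fun y => ?_
    rw [Real.norm_eq_abs, abs_of_pos (inv_pos.mpr (Real.cosh_pos y))]
    exact inv_cosh_le_left
  · have hg : IntegrableOn (fun y : ℝ => 2 * Real.exp (-(1:ℝ)*y)) (Ioi 0) :=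
      ((exp_neg_integrableOn_Ioi 0 one_pos).const_mul 2)
    refine hg.integrable.mono' hmeas.restrict ?_
    refine .of_forall fun y => ?_
    rw [Real.norm_eq_abs, abs_of_pos (inv_pos.mpr (Real.cosh_pos y))]
    simpa using inv_cosh_le_right (y := y)

lemma neg_I_eq (b y : ℝ) : -(I*(b:ℂ)*(y:ℝ)) = ((-(b*y) : ℝ) : ℂ) * I := by push_cast; ring

lemma integrable_cexp_div_cosh (b : ℝ) :
    Integrable (fun y : ℝ => Complex.exp (-(I*b*y)) / (Real.cosh y : ℂ)) := by
  have hcont : Continuous (fun y : ℝ => Complex.exp (-(I*b*y)) / (Real.cosh y : ℂ)) := by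
    apply Continuous.div
    · exact Complex.continuous_exp.comp (by continuity)
    · exact Complex.continuous_ofReal.comp Real.continuous_cosh
    · intro y
      exact_mod_cast (Real.cosh_pos y).ne'
  refine integrable_inv_cosh.mono' hcont.aestronglyMeasurable (.of_forall fun y => ?_)
  rw [norm_div, neg_I_eq, Complex.norm_exp_ofReal_mul_I,
    Complex.norm_real, Real.norm_eq_abs, abs_of_pos (Real.cosh_pos y), one_div]

lemma integral_cos_div_cosh (b : ℝ) :
    ∫ y : ℝ, Real.cos (b*y) / Real.cosh y = π / Real.cosh (π*b/2) := by
  have h1 : (∫ y : ℝ, Complex.exp (-(I*b*y)) / (Real.cosh y : ℂ))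
      = ((π / Real.cosh (π*b/2) : ℝ) : ℂ) := by
    rw [← subst_eq b, beta_eq b, sin_eval b]
    push_cast; ring
  have h2 := integral_re (integrable_cexp_div_cosh b)
  rw [h1] at h2
  simp only [RCLike.re_eq_complex_re, Complex.ofReal_re] at h2
  rw [← h2]
  apply integral_congr_ae
  refine .of_forall fun y => ?_
  show Real.cos (b*y) / Real.cosh y = (Complex.exp (-(I*b*y)) / (Real.cosh y:ℂ)).re
  rw [neg_I_eq, Complex.div_ofReal_re, Complex.exp_ofReal_mul_I_re, Real.cos_neg]

lemma integrable_cos_div_cosh (b : ℝ) :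
    Integrable (fun y : ℝ => Real.cos (b*y) / Real.cosh y) := by
  have hcont : Continuous (fun y : ℝ => Real.cos (b*y) / Real.cosh y) := by
    apply Continuous.div (by continuity) Real.continuous_cosh
    exact fun y => (Real.cosh_pos y).ne'
  refine integrable_inv_cosh.mono' hcont.aestronglyMeasurable (.of_forall fun y => ?_)
  rw [Real.norm_eq_abs, abs_div, abs_of_pos (Real.cosh_pos y), div_eq_mul_inv]
  have h1 : |Real.cos (b*y)| ≤ 1 := Real.abs_cos_le_one _
  have h2 : 0 ≤ (Real.cosh y)⁻¹ := (inv_pos.mpr (Real.cosh_pos y)).le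
  nlinarith

lemma integral_Ioi_cos_div_cosh (b : ℝ) :
    ∫ y in Ioi (0:ℝ), Real.cos (b*y) / Real.cosh y = π / Real.cosh (π*b/2) / 2 := by
  have hint := integrable_cos_div_cosh b
  have hsplit := intervalIntegral.integral_Iic_add_Ioi (b := (0:ℝ)) hint.integrableOn
    hint.integrableOn
  have heven : (∫ y in Iic (0:ℝ), Real.cos (b*y) / Real.cosh y)
      = ∫ y in Ioi (0:ℝ), Real.cos (b*y) / Real.cosh y := by
    rw [show Iic (0:ℝ) = Iic (-0) by norm_num, ← integral_comp_neg_Ioi]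
    apply integral_congr_ae
    refine .of_forall fun y => ?_
    show Real.cos (b * -y) / Real.cosh (-y) = Real.cos (b*y) / Real.cosh y
    rw [Real.cosh_neg, mul_neg, Real.cos_neg]
  rw [heven, integral_cos_div_cosh b] at hsplit
  linarith

lemma integrable_exp_sq_cos (y : ℝ) :
    Integrable (fun x : ℝ => Real.exp (-x^2) * Real.cos (2*x*y)) := by
  have hg : Integrable (fun x : ℝ => Real.exp (-1*x^2)) := integrable_exp_neg_mul_sq one_pos
  have hcont : Continuous (fun x : ℝ => Real.exp (-x^2) * Real.cos (2*x*y)) := by continuity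
  refine hg.mono' hcont.aestronglyMeasurable (.of_forall fun x => ?_)
  rw [Real.norm_eq_abs, abs_mul, abs_of_pos (Real.exp_pos _), neg_one_mul]
  nlinarith [Real.abs_cos_le_one (2*x*y), Real.exp_pos (-x^2), abs_nonneg (Real.cos (2*x*y))]

lemma cexp_split (y x : ℝ) : Complex.exp (I*(2*y:ℝ)*x) * Complex.exp (-1*(x:ℂ)^2)
    = Complex.exp (((-x^2 : ℝ) : ℂ)) * Complex.exp (((2*x*y : ℝ):ℂ) * I) := by
  rw [← Complex.exp_add, ← Complex.exp_add]
  congr 1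
  push_cast
  ring

lemma gauss_cos_real (y : ℝ) :
    ∫ x : ℝ, Real.exp (-x^2) * Real.cos (2*x*y) = Real.sqrt π * Real.exp (-y^2) := by
  have h := fourierIntegral_gaussian (b := 1) (by norm_num) (t := ((2*y : ℝ) : ℂ))
  have hre : ((π : ℂ)/1) ^ (1/2 : ℂ) * Complex.exp (-((2*y:ℝ):ℂ)^2/(4*1))
      = ((Real.sqrt π * Real.exp (-y^2) : ℝ) : ℂ) := by
    rw [div_one]
    have h1 : ((π : ℝ) : ℂ) ^ (1/2 : ℂ) = ((Real.sqrt π : ℝ) : ℂ) := by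
      rw [show (1/2:ℂ) = ((1/2:ℝ):ℂ) by norm_num, ← Complex.ofReal_cpow Real.pi_pos.le,
        ← Real.sqrt_eq_rpow]
    have h2 : (-((2*y:ℝ):ℂ)^2/(4*1)) = ((-y^2 : ℝ) : ℂ) := by push_cast; ring
    rw [h1, h2, ← Complex.ofReal_exp, ← Complex.ofReal_mul]
  rw [hre] at h
  have hig : Integrable (fun x : ℝ => Complex.exp (I*(2*y:ℝ)*x) * Complex.exp (-1*(x:ℂ)^2)) := by
    have h0 := integrable_cexp_quadratic (b := 1) (by norm_num) (I*(2*y:ℝ)) 0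
    refine h0.congr (.of_forall fun x => ?_)
    show Complex.exp (-1 * (x:ℂ)^2 + I*(2*y:ℝ)*x + 0) = Complex.exp (I*(2*y:ℝ)*x) * Complex.exp (-1*(x:ℂ)^2)
    rw [← Complex.exp_add]
    congr 1
    push_cast
    ring
  have h2 := integral_re hig
  rw [h] at h2
  simp only [RCLike.re_eq_complex_re, Complex.ofReal_re] at h2
  rw [← h2]
  apply integral_congr_ae
  refine .of_forall fun x => ?_
  show Real.exp (-x^2) * Real.cos (2*x*y)
      = (Complex.exp (I*(2*y:ℝ)*x) * Complex.exp (-1*(x:ℂ)^2)).re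
  rw [cexp_split, ← Complex.ofReal_exp, Complex.re_ofReal_mul, Complex.exp_ofReal_mul_I_re]

lemma gauss_cos_Ioi (y : ℝ) :
    ∫ x in Ioi (0:ℝ), Real.exp (-x^2) * Real.cos (2*x*y)
      = Real.sqrt π * Real.exp (-y^2) / 2 := by
  have hint := integrable_exp_sq_cos y
  have hsplit := intervalIntegral.integral_Iic_add_Ioi (b := (0:ℝ)) hint.integrableOn
    hint.integrableOn
  have heven : (∫ x in Iic (0:ℝ), Real.exp (-x^2) * Real.cos (2*x*y))
      = ∫ x in Ioi (0:ℝ), Real.exp (-x^2) * Real.cos (2*x*y) := by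
    rw [show Iic (0:ℝ) = Iic (-0) by norm_num, ← integral_comp_neg_Ioi]
    apply integral_congr_ae
    refine .of_forall fun x => ?_
    show Real.exp (-(-x)^2) * Real.cos (2*(-x)*y) = Real.exp (-x^2) * Real.cos (2*x*y)
    rw [neg_sq, show 2*(-x)*y = -(2*x*y) by ring, Real.cos_neg]
  rw [heven, gauss_cos_real y] at hsplit
  linarith

lemma cos_cosh_scaled {c : ℝ} (hc : 0 < c) (b : ℝ) :
    ∫ y in Ioi (0:ℝ), Real.cos (b*y)/Real.cosh (c*y)
      = c⁻¹ * (π / Real.cosh (π*(b/c)/2) / 2) := by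
  have h := MeasureTheory.integral_comp_mul_left_Ioi
    (g := fun y => Real.cos ((b/c)*y)/Real.cosh y) 0 hc
  rw [mul_zero] at h
  rw [integral_Ioi_cos_div_cosh (b/c), smul_eq_mul] at h
  rw [← h]
  apply integral_congr_ae
  refine .of_forall fun y => ?_
  show Real.cos (b*y)/Real.cosh (c*y) = Real.cos ((b/c)*(c*y))/Real.cosh (c*y)
  rw [show (b/c)*(c*y) = b*y by field_simp]

lemma integrable_prod_kernel {b : ℝ} (hb : 0 < b) :
    Integrable (Function.uncurry fun x y : ℝ =>
      Real.exp (-x^2) * (Real.cos (2*x*y) / Real.cosh (b*y)))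
      ((volume.restrict (Ioi (0:ℝ))).prod (volume.restrict (Ioi (0:ℝ)))) := by
  have hcont : Continuous (Function.uncurry fun x y : ℝ =>
      Real.exp (-x^2) * (Real.cos (2*x*y) / Real.cosh (b*y))) := by
    apply Continuous.mul (by continuity)
    apply Continuous.div (by continuity) (by continuity)
    exact fun p => (Real.cosh_pos _).ne'
  have hf : IntegrableOn (fun x : ℝ => Real.exp (-x^2)) (Ioi 0) := by
    have : Integrable (fun x : ℝ => Real.exp (-1*x^2)) := integrable_exp_neg_mul_sq one_pos
    refine (this.congr (.of_forall fun x => ?_)).integrableOn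
    show Real.exp (-1*x^2) = Real.exp (-x^2)
    rw [neg_one_mul]
  have hg : IntegrableOn (fun y : ℝ => 2 * Real.exp (-b*y)) (Ioi 0) :=
    (exp_neg_integrableOn_Ioi 0 hb).const_mul 2
  have hG : Integrable (fun z : ℝ × ℝ => Real.exp (-z.1^2) * (2 * Real.exp (-b*z.2)))
      ((volume.restrict (Ioi (0:ℝ))).prod (volume.restrict (Ioi (0:ℝ)))) :=
    hf.mul_prod hg
  refine hG.mono' hcont.aestronglyMeasurable (.of_forall fun z => ?_)
  rw [Function.uncurry]
  rw [Real.norm_eq_abs, abs_mul, abs_of_pos (Real.exp_pos _), abs_div,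
    abs_of_pos (Real.cosh_pos _)]
  have h1 : |Real.cos (2*z.1*z.2)| / Real.cosh (b*z.2) ≤ 2 * Real.exp (-b*z.2) := by
    have h2 : |Real.cos (2*z.1*z.2)| / Real.cosh (b*z.2) ≤ (Real.cosh (b*z.2))⁻¹ := by
      rw [div_eq_mul_inv]
      have := inv_pos.mpr (Real.cosh_pos (b*z.2))
      nlinarith [Real.abs_cos_le_one (2*z.1*z.2), abs_nonneg (Real.cos (2*z.1*z.2))]
    refine h2.trans ?_
    have := inv_cosh_le_right (y := b*z.2)
    rwa [show -(b*z.2) = -b*z.2 by ring] at this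
  have h3 : 0 ≤ Real.exp (-z.1^2) := (Real.exp_pos _).le
  calc Real.exp (-z.1^2) * (|Real.cos (2*z.1*z.2)| / Real.cosh (b*z.2))
      ≤ Real.exp (-z.1^2) * (2 * Real.exp (-b*z.2)) := by
        exact mul_le_mul_of_nonneg_left h1 h3

lemma key_identity {b : ℝ} (hb : 0 < b) :
    π/(2*b) * ∫ x in Ioi (0:ℝ), Real.exp (-x^2) / Real.cosh ((π/b) * x)
      = Real.sqrt π / 2 * ∫ y in Ioi (0:ℝ), Real.exp (-y^2) / Real.cosh (b*y) := by
  have hswap := MeasureTheory.integral_integral_swap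
    (f := fun x y : ℝ => Real.exp (-x^2) * (Real.cos (2*x*y) / Real.cosh (b*y)))
    (integrable_prod_kernel hb)
  have hL : (∫ x in Ioi (0:ℝ), ∫ y in Ioi (0:ℝ),
      Real.exp (-x^2) * (Real.cos (2*x*y) / Real.cosh (b*y)))
      = π/(2*b) * ∫ x in Ioi (0:ℝ), Real.exp (-x^2) / Real.cosh ((π/b) * x) := by
    rw [← MeasureTheory.integral_const_mul]
    apply integral_congr_ae
    refine .of_forall fun x => ?_
    show (∫ y in Ioi (0:ℝ), Real.exp (-x^2) * (Real.cos (2*x*y) / Real.cosh (b*y)))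
      = π/(2*b) * (Real.exp (-x^2) / Real.cosh ((π/b) * x))
    rw [MeasureTheory.integral_const_mul, cos_cosh_scaled hb (2*x)]
    rw [show π*((2*x)/b)/2 = (π/b)*x by field_simp]
    field_simp
  have hR : (∫ y in Ioi (0:ℝ), ∫ x in Ioi (0:ℝ),
      Real.exp (-x^2) * (Real.cos (2*x*y) / Real.cosh (b*y)))
      = Real.sqrt π / 2 * ∫ y in Ioi (0:ℝ), Real.exp (-y^2) / Real.cosh (b*y) := by
    rw [← MeasureTheory.integral_const_mul]
    apply integral_congr_ae
    refine .of_forall fun y => ?_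
    show (∫ x in Ioi (0:ℝ), Real.exp (-x^2) * (Real.cos (2*x*y) / Real.cosh (b*y)))
      = Real.sqrt π / 2 * (Real.exp (-y^2) / Real.cosh (b*y))
    have hc : (∫ x in Ioi (0:ℝ), Real.exp (-x^2) * (Real.cos (2*x*y) / Real.cosh (b*y)))
        = (∫ x in Ioi (0:ℝ), Real.exp (-x^2) * Real.cos (2*x*y)) * (Real.cosh (b*y))⁻¹ := by
      rw [← MeasureTheory.integral_mul_const]
      apply integral_congr_ae
      refine .of_forall fun x => ?_
      show Real.exp (-x^2) * (Real.cos (2*x*y) / Real.cosh (b*y))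
        = Real.exp (-x^2) * Real.cos (2*x*y) * (Real.cosh (b*y))⁻¹
      ring
    rw [hc, gauss_cos_Ioi y]
    ring
  rw [hL, hR] at hswap
  exact hswap

theorem ramanujan_question_295 (α β : ℝ) (hα : 0 < α) (hβ : 0 < β)
    (hαβ : α * β = π) :
    Real.sqrt α * ∫ x in Set.Ioi (0:ℝ), Real.exp (-x ^ 2) / Real.cosh (α * x)
      = Real.sqrt β * ∫ x in Set.Ioi (0:ℝ), Real.exp (-x ^ 2) / Real.cosh (β * x) := by
  have hπβ : π / β = α := by field_simp [← hαβ]; linarith [mul_comm α β]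
  have E := key_identity hβ
  rw [hπβ] at E
  set Iα := ∫ x in Set.Ioi (0:ℝ), Real.exp (-x ^ 2) / Real.cosh (α * x) with hIα
  set Iβ := ∫ x in Set.Ioi (0:ℝ), Real.exp (-x ^ 2) / Real.cosh (β * x) with hIβ
  set sa := Real.sqrt α
  set sb := Real.sqrt β
  set sp := Real.sqrt π
  have hpi : sp * sp = π := Real.mul_self_sqrt Real.pi_pos.le
  have hbeta : sb * sb = β := Real.mul_self_sqrt hβ.le
  have hab : sa * sb = sp := by rw [← Real.sqrt_mul hα.le, hαβ]
  have hsb : 0 < sb := Real.sqrt_pos.mpr hβ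
  have hsp : 0 < sp := Real.sqrt_pos.mpr Real.pi_pos
  have E2 : π * Iα = sp * β * Iβ := by
    have h2b : (2*β) ≠ 0 := by positivity
    field_simp at E
    linarith
  have h3 : sp * Iα = sb * sb * Iβ := by
    apply mul_left_cancel₀ hsp.ne'
    linear_combination E2 + Iα * hpi - sp * Iβ * hbeta
  apply mul_left_cancel₀ hsb.ne'
  linear_combination h3 + Iα * hab
end

section
/- Let f : [0,∞) → ℝ be continuous and suppose the limit L = lim_{x→∞} f(x) exists. Then for all a, b > 0, the improper integral ∫₀^∞ (f(ax) − f(bx))/x dx converges and equals (f(0) − L) · log(b/a). -/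
open Real Filter

theorem frullani (f : ℝ → ℝ) (hf : ContinuousOn f (Set.Ici 0))
    (L : ℝ) (hL : Tendsto f atTop (nhds L))
    (a b : ℝ) (ha : 0 < a) (hb : 0 < b) :
    Tendsto
      (fun p : ℝ × ℝ => ∫ x in p.1..p.2, (f (a * x) - f (b * x)) / x)
      ((nhdsWithin 0 (Set.Ioi 0)) ×ˢ atTop)
      (nhds ((f 0 - L) * Real.log (b / a))) := by
  have hm : (0:ℝ) < min a b := lt_min ha hb
  set g : ℝ → ℝ := fun u => f u / u with hg
  -- continuity of g on Ioi 0
  have hgc : ContinuousOn g (Set.Ioi 0) := by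
    apply ContinuousOn.div (hf.mono (Set.Ioi_subset_Ici le_rfl)) continuousOn_id
    intro x hx; exact ne_of_gt hx
  have hgint : ∀ c d : ℝ, 0 < c → 0 < d → IntervalIntegrable g MeasureTheory.volume c d := by
    intro c d hc hd
    apply ContinuousOn.intervalIntegrable (hgc.mono ?_)
    intro x hx
    rw [Set.uIcc_eq_union] at hx
    rcases hx with hx | hx
    · exact lt_of_lt_of_le hc hx.1
    · exact lt_of_lt_of_le hd hx.1
  -- scaling identity
  have key : ∀ s : ℝ, 0 < s → ∀ c d : ℝ,
      (∫ x in c..d, f (s * x) / x) = ∫ t in s * c..s * d, g t := by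
    intro s hs c d
    have hpt : ∀ x : ℝ, f (s * x) / x = s * g (s * x) := by
      intro x
      rcases eq_or_ne x 0 with rfl | hx
      · simp [hg]
      · simp only [hg]
        rw [mul_div_assoc', mul_div_mul_left _ _ (ne_of_gt hs)]
    simp only [hpt]
    rw [intervalIntegral.integral_const_mul, ← smul_eq_mul,
      intervalIntegral.smul_integral_comp_mul_left]
  -- the auxiliary function
  set I : ℝ → ℝ := fun s => ∫ u in a..b, f (s * u) / u with hI
  -- main identity
  have hiden : ∀ ε R : ℝ, 0 < ε → 0 < R →
      (∫ x in ε..R, (f (a * x) - f (b * x)) / x) = I ε - I R := by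
    intro ε R hε hR
    have hint : ∀ c : ℝ, 0 < c → IntervalIntegrable (fun x => f (c * x) / x)
        MeasureTheory.volume ε R := by
      intro c hc
      apply ContinuousOn.intervalIntegrable
      have hpos : ∀ x ∈ Set.uIcc ε R, 0 < x := by
        intro x hx
        rw [Set.uIcc_eq_union] at hx
        rcases hx with hx | hx
        · exact lt_of_lt_of_le hε hx.1
        · exact lt_of_lt_of_le hR hx.1
      refine ContinuousOn.div ?_ continuousOn_id ?_
      · apply hf.comp (continuous_const.mul continuous_id).continuousOn
        intro x hx
        exact le_of_lt (mul_pos hc (hpos x hx))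
      · intro x hx
        exact ne_of_gt (hpos x hx)
    have h1 : (∫ x in ε..R, (f (a * x) - f (b * x)) / x)
        = (∫ x in ε..R, f (a * x) / x) - ∫ x in ε..R, f (b * x) / x := by
      rw [← intervalIntegral.integral_sub (hint a ha) (hint b hb)]
      congr 1; funext x; rw [sub_div]
    rw [h1, key a ha, key b hb,
      intervalIntegral.integral_interval_sub_interval_comm
        (hgint _ _ (mul_pos ha hε) (mul_pos ha hR))
        (hgint _ _ (mul_pos hb hε) (mul_pos hb hR))
        (hgint _ _ (mul_pos ha hε) (mul_pos hb hε)),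
      hI]
    simp only [key a ha, key b hb]
    rw [key ε hε a b, key R hR a b]
    rw [mul_comm ε a, mul_comm ε b, mul_comm R a, mul_comm R b]
  -- positivity of points in Ι a b
  have huIoc : ∀ u : ℝ, u ∈ Set.uIoc a b → 0 < u := by
    intro u hu
    rw [Set.uIoc, Set.mem_Ioc] at hu
    exact lt_trans hm hu.1
  -- limit value integral
  have hval : ∀ c : ℝ, (∫ u in a..b, c / u) = c * Real.log (b / a) := by
    intro c
    have h0 : (0:ℝ) ∉ Set.uIcc a b := by
      intro h
      rw [Set.uIcc, Set.mem_Icc] at h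
      exact absurd h.1 (not_le.mpr hm)
    simp only [div_eq_mul_inv]
    rw [intervalIntegral.integral_const_mul, integral_inv h0, ← div_eq_mul_inv]
  -- limit as ε → 0⁺
  have hI0 : Tendsto I (nhdsWithin 0 (Set.Ioi 0)) (nhds (f 0 * Real.log (b / a))) := by
    rw [← hval (f 0)]
    obtain ⟨C, hC⟩ := (isCompact_Icc (a := (0:ℝ)) (b := max a b)).exists_bound_of_continuousOn
      (hf.mono (by intro x hx; exact hx.1))
    have hC0 : 0 ≤ C := le_trans (norm_nonneg _) (hC 0 ⟨le_rfl, le_of_lt (lt_max_of_lt_left ha)⟩)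
    apply intervalIntegral.tendsto_integral_filter_of_dominated_convergence
      (fun _ => C / min a b)
    · filter_upwards [self_mem_nhdsWithin] with ε (hε : ε ∈ Set.Ioi (0:ℝ))
      apply ContinuousOn.aestronglyMeasurable _ measurableSet_uIoc
      refine ContinuousOn.div ?_ continuousOn_id ?_
      · apply hf.comp (continuous_const.mul continuous_id).continuousOn
        intro u hu
        exact le_of_lt (mul_pos hε (huIoc u hu))
      · intro u hu; exact ne_of_gt (huIoc u hu)
    · filter_upwards [Ioo_mem_nhdsGT_of_mem (Set.left_mem_Ico.mpr one_pos)] with ε hε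
      apply MeasureTheory.ae_of_all
      intro u hu
      have hu0 : 0 < u := huIoc u hu
      rw [Set.uIoc, Set.mem_Ioc] at hu
      have humax : u ≤ max a b := hu.2
      have hmin_u : min a b ≤ u := le_of_lt hu.1
      rw [norm_div, Real.norm_eq_abs, Real.norm_eq_abs, abs_of_pos hu0]
      exact div_le_div₀ hC0 (hC _ ⟨le_of_lt (mul_pos hε.1 hu0),
        le_trans (mul_le_of_le_one_left (le_of_lt hu0) (le_of_lt hε.2)) humax⟩) hm hmin_u
    · exact intervalIntegrable_const
    · apply MeasureTheory.ae_of_all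
      intro u hu
      have hu0 : 0 < u := huIoc u hu
      apply Tendsto.div_const
      have h1 : Tendsto (fun ε : ℝ => ε * u) (nhdsWithin 0 (Set.Ioi 0))
          (nhdsWithin 0 (Set.Ici 0)) := by
        rw [tendsto_nhdsWithin_iff]
        constructor
        · have h2 : Tendsto (fun ε : ℝ => ε * u) (nhds 0) (nhds 0) := by
            simpa using (continuous_mul_right u).tendsto (0:ℝ)
          exact h2.mono_left nhdsWithin_le_nhds
        · filter_upwards [self_mem_nhdsWithin] with ε (hε : ε ∈ Set.Ioi (0:ℝ))
          exact le_of_lt (mul_pos hε hu0)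
      exact Filter.Tendsto.comp (hf 0 Set.self_mem_Ici) h1
  -- limit as R → ∞
  have hIT : Tendsto I atTop (nhds (L * Real.log (b / a))) := by
    rw [← hval L]
    obtain ⟨M, hM⟩ := (hL.eventually (Metric.ball_mem_nhds L one_pos)).exists_forall_of_atTop
    apply intervalIntegral.tendsto_integral_filter_of_dominated_convergence
      (fun _ => (|L| + 1) / min a b)
    · filter_upwards [eventually_gt_atTop (0:ℝ)] with R hR
      apply ContinuousOn.aestronglyMeasurable _ measurableSet_uIoc
      refine ContinuousOn.div ?_ continuousOn_id ?_
      · apply hf.comp (continuous_const.mul continuous_id).continuousOn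
        intro u hu
        exact le_of_lt (mul_pos hR (huIoc u hu))
      · intro u hu; exact ne_of_gt (huIoc u hu)
    · filter_upwards [eventually_ge_atTop (max (M / min a b) 0)] with R hR
      apply MeasureTheory.ae_of_all
      intro u hu
      have hu0 : 0 < u := huIoc u hu
      have hR0 : 0 ≤ R := le_trans (le_max_right _ _) hR
      have hmin_u : min a b ≤ u := by
        rw [Set.uIoc, Set.mem_Ioc] at hu; exact le_of_lt hu.1
      have hRu : M ≤ R * u := by
        have h1 : M ≤ R * min a b := by
          rw [← div_le_iff₀ hm]; exact le_trans (le_max_left _ _) hR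
        exact le_trans h1 (mul_le_mul_of_nonneg_left hmin_u hR0)
      have hfb : |f (R * u)| ≤ |L| + 1 := by
        have := hM (R * u) hRu
        rw [Real.dist_eq] at this
        calc |f (R * u)| = |(f (R * u) - L) + L| := by ring_nf
          _ ≤ |f (R * u) - L| + |L| := abs_add_le _ _
          _ ≤ |L| + 1 := by linarith
      rw [norm_div, Real.norm_eq_abs, Real.norm_eq_abs, abs_of_pos hu0]
      exact div_le_div₀ (by positivity) hfb hm hmin_u
    · exact intervalIntegrable_const
    · apply MeasureTheory.ae_of_all
      intro u hu
      have hu0 : 0 < u := huIoc u hu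
      apply Tendsto.div_const
      exact hL.comp (tendsto_id.atTop_mul_const hu0)
  -- assemble
  have hmain : Tendsto (fun p : ℝ × ℝ => I p.1 - I p.2)
      ((nhdsWithin 0 (Set.Ioi 0)) ×ˢ atTop)
      (nhds (f 0 * Real.log (b / a) - L * Real.log (b / a))) :=
    (hI0.comp tendsto_fst).sub (hIT.comp tendsto_snd)
  rw [sub_mul]
  apply hmain.congr'
  have h1 : ∀ᶠ ε in nhdsWithin (0:ℝ) (Set.Ioi 0), 0 < ε := self_mem_nhdsWithin
  have h2 : ∀ᶠ R in (atTop : Filter ℝ), 0 < R := eventually_gt_atTop 0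
  filter_upwards [h1.prod_mk h2] with p hp
  exact (hiden p.1 p.2 hp.1 hp.2).symm
end

section
/- Let f : [0,∞) → ℝ be continuous, and suppose f(x)/x is integrable on [c,∞) for every c > 0. Then for all a, b > 0, the improper integral ∫₀^∞ (f(ax) − f(bx))/x dx converges and equals f(0) · log(b/a). -/
open Real Filter MeasureTheory

theorem frullani_aux (f : ℝ → ℝ) (hf : ContinuousOn f (Set.Ici 0))
    (hint : ∀ c : ℝ, 0 < c → IntegrableOn (fun x => f x / x) (Set.Ici c))
    (a b : ℝ) (ha : 0 < a) (hb : 0 < b) (hab : a ≤ b) :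
    Tendsto
      (fun ε : ℝ => ∫ x in Set.Ioi ε, (f (a * x) - f (b * x)) / x)
      (nhdsWithin 0 (Set.Ioi 0))
      (nhds (f 0 * Real.log (b / a))) := by
  open Set in
  have key : ∀ ε : ℝ, 0 < ε →
      ∫ x in Set.Ioi ε, (f (a * x) - f (b * x)) / x = ∫ u in a*ε..b*ε, f u / u := by
    intro ε hε
    have gInt : ∀ c : ℝ, 0 < c → IntegrableOn (fun u => f u / u) (Ioi c) := fun c hc =>
      (hint c hc).mono_set Ioi_subset_Ici_self
    have step : ∀ c : ℝ, 0 < c → (IntegrableOn (fun x => f (c*x) / x) (Ioi ε) ∧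
        ∫ x in Ioi ε, f (c*x) / x = ∫ u in Ioi (c*ε), f u / u) := by
      intro c hc
      have hcomp : IntegrableOn (fun x => f (c*x) / (c*x)) (Ioi ε) :=
        (integrableOn_Ioi_comp_mul_left_iff (fun u => f u / u) ε hc).2 (gInt _ (by positivity))
      have heq : ∀ x ∈ Ioi ε, c * (f (c*x) / (c*x)) = f (c*x) / x := by
        intro x hx
        have hx0 : x ≠ 0 := (hε.trans hx).ne'
        field_simp
      constructor
      · exact IntegrableOn.congr_fun (hcomp.const_mul c) heq measurableSet_Ioi
      · rw [← setIntegral_congr_fun measurableSet_Ioi heq, integral_const_mul,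
          integral_comp_mul_left_Ioi (fun u => f u / u) ε hc, smul_eq_mul,
          ← mul_assoc, mul_inv_cancel₀ hc.ne', one_mul]
    obtain ⟨Ia, Ea⟩ := step a ha
    obtain ⟨Ib, Eb⟩ := step b hb
    have hsub : ∀ x ∈ Ioi ε, (f (a*x) - f (b*x)) / x = f (a*x)/x - f (b*x)/x := fun x _ =>
      sub_div _ _ _
    rw [setIntegral_congr_fun measurableSet_Ioi hsub, integral_sub Ia Ib, Ea, Eb]
    have hsplit : ∫ u in Ioi (a*ε), f u / u =
        (∫ u in Ioc (a*ε) (b*ε), f u / u) + ∫ u in Ioi (b*ε), f u / u := by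
      rw [← setIntegral_union Ioc_disjoint_Ioi_same measurableSet_Ioi
        ((gInt _ (by positivity)).mono_set Ioc_subset_Ioi_self) (gInt _ (by positivity)),
        Ioc_union_Ioi_eq_Ioi (by nlinarith)]
    rw [hsplit, intervalIntegral.integral_of_le (by nlinarith)]
    ring
  open Set in
  have lim : Tendsto (fun ε : ℝ => ∫ u in a*ε..b*ε, f u / u) (nhdsWithin 0 (Set.Ioi 0))
      (nhds (f 0 * Real.log (b/a))) := by
    set L := Real.log (b/a) with hLdef
    have hL0 : 0 ≤ L := Real.log_nonneg ((one_le_div ha).2 hab)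
    rw [Metric.tendsto_nhdsWithin_nhds]
    intro η hη
    set η' := η / (L+1) with hη'def
    have hη' : 0 < η' := div_pos hη (by linarith)
    have hcont : ContinuousWithinAt f (Ici 0) 0 := hf 0 (mem_Ici.2 le_rfl)
    rw [ContinuousWithinAt, Metric.tendsto_nhdsWithin_nhds] at hcont
    obtain ⟨r, hr, hrf⟩ := hcont η' hη'
    refine ⟨r / b, by positivity, ?_⟩
    intro ε hε hdist
    have hε0 : 0 < ε := hε
    have hεr : ε < r / b := by
      rwa [Real.dist_eq, sub_zero, abs_of_pos hε0] at hdist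
    have hle : a * ε ≤ b * ε := by nlinarith
    have haε : 0 < a * ε := by positivity
    have hbound : ∀ u ∈ Icc (a*ε) (b*ε), |f u - f 0| ≤ η' := by
      intro u hu
      have hu0 : 0 < u := lt_of_lt_of_le haε hu.1
      have hur : u < r := by
        calc u ≤ b * ε := hu.2
        _ < b * (r / b) := by exact (mul_lt_mul_iff_right₀ hb).2 hεr
        _ = r := by field_simp
      have := hrf (mem_Ici.2 hu0.le) (by rwa [Real.dist_eq, sub_zero, abs_of_pos hu0])
      rw [Real.dist_eq] at this
      exact this.le
    have hIcc : uIcc (a*ε) (b*ε) = Icc (a*ε) (b*ε) := uIcc_of_le hle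
    have hsubIoi : Icc (a*ε) (b*ε) ⊆ Ioi 0 := fun u hu => lt_of_lt_of_le haε hu.1
    have hfc : ContinuousOn f (Icc (a*ε) (b*ε)) :=
      hf.mono (fun u hu => mem_Ici.2 (le_of_lt (hsubIoi hu)))
    have hI1 : IntervalIntegrable (fun u => (1:ℝ) / u) volume (a*ε) (b*ε) := by
      apply ContinuousOn.intervalIntegrable
      rw [hIcc]
      exact continuousOn_const.div continuousOn_id (fun u hu => (hsubIoi hu).ne')
    have hIh : IntervalIntegrable (fun u => (f u - f 0) / u) volume (a*ε) (b*ε) := by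
      apply ContinuousOn.intervalIntegrable
      rw [hIcc]
      exact (hfc.sub continuousOn_const).div continuousOn_id (fun u hu => (hsubIoi hu).ne')
    have h1int : ∫ u in a*ε..b*ε, (1:ℝ)/u = L := by
      rw [integral_one_div_of_pos haε (by positivity), mul_div_mul_right _ _ hε0.ne']
    have split : ∫ u in a*ε..b*ε, f u / u
        = (∫ u in a*ε..b*ε, (f u - f 0)/u) + f 0 * L := by
      have : ∫ u in a*ε..b*ε, f u / u
          = ∫ u in a*ε..b*ε, ((f u - f 0)/u + f 0 * (1/u)) := by
        apply intervalIntegral.integral_congr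
        intro u hu
        have hu0 : (0:ℝ) < u := hsubIoi (hIcc ▸ hu)
        field_simp
        ring
      rw [this, intervalIntegral.integral_add hIh ((hI1.const_mul (f 0))),
        intervalIntegral.integral_const_mul, h1int]
    rw [Real.dist_eq, split, add_sub_cancel_right]
    have habs : |∫ u in a*ε..b*ε, (f u - f 0)/u| ≤ η' * L := by
      calc |∫ u in a*ε..b*ε, (f u - f 0)/u|
          ≤ ∫ u in a*ε..b*ε, |(f u - f 0)/u| :=
            intervalIntegral.abs_integral_le_integral_abs hle
        _ ≤ ∫ u in a*ε..b*ε, η' * (1/u) := by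
            apply intervalIntegral.integral_mono_on hle hIh.abs (hI1.const_mul η')
            intro u hu
            have hu0 : (0:ℝ) < u := hsubIoi hu
            rw [abs_div, abs_of_pos hu0, mul_one_div]
            exact (div_le_div_iff_of_pos_right hu0).2 (hbound u hu)
        _ = η' * L := by rw [intervalIntegral.integral_const_mul, h1int]
    calc |∫ u in a*ε..b*ε, (f u - f 0)/u| ≤ η' * L := habs
      _ < η' * (L + 1) := by nlinarith
      _ = η := by rw [hη'def]; field_simp
  refine lim.congr' ?_
  filter_upwards [self_mem_nhdsWithin] with ε hε
  exact (key ε hε).symm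

theorem frullani_variant (f : ℝ → ℝ) (hf : ContinuousOn f (Set.Ici 0))
    (hint : ∀ c : ℝ, 0 < c → IntegrableOn (fun x => f x / x) (Set.Ici c))
    (a b : ℝ) (ha : 0 < a) (hb : 0 < b) :
    Tendsto
      (fun ε : ℝ => ∫ x in Set.Ioi ε, (f (a * x) - f (b * x)) / x)
      (nhdsWithin 0 (Set.Ioi 0))
      (nhds (f 0 * Real.log (b / a))) := by
  rcases le_or_gt a b with hab | hba
  · exact frullani_aux f hf hint a b ha hb hab
  · have h := frullani_aux f hf hint b a hb ha hba.le
    have hfun : (fun ε : ℝ => ∫ x in Set.Ioi ε, (f (a * x) - f (b * x)) / x)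
        = fun ε : ℝ => -∫ x in Set.Ioi ε, (f (b * x) - f (a * x)) / x := by
      funext ε
      rw [← integral_neg]
      congr 1
      funext x
      rw [← neg_div, neg_sub]
    have hlog : f 0 * Real.log (b / a) = -(f 0 * Real.log (a / b)) := by
      rw [show b / a = (a / b)⁻¹ by rw [inv_div], Real.log_inv]
      ring
    rw [hfun, hlog]
    exact h.neg
end

section
/- (q-binomial theorem) For complex a, q, z with |q| < 1 and |z| < 1, Σ_{m=0}^∞ ((a;q)_m / (q;q)_m) z^m = (az;q)_∞ / (z;q)_∞. -/
open Filter Topology Finset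

namespace QBinAux

noncomputable def c (a q : ℂ) (m : ℕ) : ℂ :=
  (∏ k ∈ Finset.range m, (1 - a * q ^ k)) / (∏ k ∈ Finset.range m, (1 - q * q ^ k))

lemma norm_mul_pow_lt_one {q w : ℂ} (hq : ‖q‖ < 1) (hw : ‖w‖ < 1) (k : ℕ) :
    ‖w * q ^ k‖ < 1 := by
  rw [norm_mul, norm_pow]
  calc ‖w‖ * ‖q‖ ^ k ≤ ‖w‖ * 1 := by
        have : ‖q‖ ^ k ≤ 1 := pow_le_one₀ (norm_nonneg q) hq.le
        exact mul_le_mul_of_nonneg_left this (norm_nonneg w)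
    _ < 1 := by simpa using hw

lemma den_factor_ne_zero {q : ℂ} (hq : ‖q‖ < 1) (k : ℕ) : (1 : ℂ) - q * q ^ k ≠ 0 := by
  intro h
  have h1 : q * q ^ k = 1 := by linear_combination -h
  have := norm_mul_pow_lt_one hq hq k
  rw [h1] at this
  simp at this

lemma c_rec {q : ℂ} (hq : ‖q‖ < 1) (a : ℂ) (m : ℕ) :
    c a q (m + 1) * (1 - q * q ^ m) = c a q m * (1 - a * q ^ m) := by
  have hne' : (∏ k ∈ Finset.range m, (1 - q * q ^ k)) ≠ 0 :=
    Finset.prod_ne_zero_iff.2 fun k _ => den_factor_ne_zero hq k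
  unfold c
  rw [Finset.prod_range_succ, Finset.prod_range_succ]
  rw [← div_div, div_mul_cancel₀ _ (den_factor_ne_zero hq m), mul_div_right_comm]

lemma c_succ {q : ℂ} (hq : ‖q‖ < 1) (a : ℂ) (m : ℕ) :
    c a q (m + 1) = c a q m * ((1 - a * q ^ m) / (1 - q * q ^ m)) := by
  rw [← mul_div_assoc, eq_div_iff (den_factor_ne_zero hq m)]
  exact c_rec hq a m

/-- Summability of the norms of the series terms. -/
lemma summable_norm {a q w : ℂ} (hq : ‖q‖ < 1) (hw : ‖w‖ < 1) :
    Summable (fun m => ‖c a q m * w ^ m‖) := by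
  set r : ℝ := (1 + ‖w‖) / 2 with hr
  have hr1 : r < 1 := by rw [hr]; linarith
  have hwr : ‖w‖ < r := by rw [hr]; linarith
  apply summable_of_ratio_norm_eventually_le hr1
  -- ratio of successive terms tends to ‖w‖ < r
  have hq0 : Tendsto (fun m : ℕ => q ^ m) atTop (𝓝 0) :=
    tendsto_pow_atTop_nhds_zero_of_norm_lt_one hq
  have htend : Tendsto (fun m : ℕ => ‖(1 - a * q ^ m) / (1 - q * q ^ m)‖ * ‖w‖) atTop
      (𝓝 (‖(1 : ℂ)‖ * ‖w‖)) := by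
    apply Tendsto.mul_const
    apply Tendsto.norm
    have h1 : Tendsto (fun m : ℕ => 1 - a * q ^ m) atTop (𝓝 (1 - a * 0)) :=
      tendsto_const_nhds.sub (tendsto_const_nhds.mul hq0)
    have h2 : Tendsto (fun m : ℕ => 1 - q * q ^ m) atTop (𝓝 (1 - q * 0)) :=
      tendsto_const_nhds.sub (tendsto_const_nhds.mul hq0)
    simp only [mul_zero, sub_zero] at h1 h2
    have h3 := h1.div h2 (by norm_num)
    rw [div_one] at h3
    exact h3
  have hlt : ‖(1 : ℂ)‖ * ‖w‖ < r := by simpa using hwr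
  filter_upwards [htend.eventually_le_const hlt] with m hm
  have hrw : c a q (m + 1) * w ^ (m + 1)
      = ((1 - a * q ^ m) / (1 - q * q ^ m) * w) * (c a q m * w ^ m) := by
    rw [c_succ hq a m]; ring
  rw [norm_norm, norm_norm, hrw, norm_mul, norm_mul]
  calc ‖(1 - a * q ^ m) / (1 - q * q ^ m)‖ * ‖w‖ * ‖c a q m * w ^ m‖
      ≤ r * ‖c a q m * w ^ m‖ := mul_le_mul_of_nonneg_right hm (norm_nonneg _)

lemma summable_terms {a q w : ℂ} (hq : ‖q‖ < 1) (hw : ‖w‖ < 1) :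
    Summable (fun m => c a q m * w ^ m) :=
  (summable_norm hq hw).of_norm

noncomputable def S (a q w : ℂ) : ℂ := ∑' m : ℕ, c a q m * w ^ m

/-- The functional equation `(1 - w) S w = (1 - a w) S (q w)`. -/
lemma funcEq {a q : ℂ} (hq : ‖q‖ < 1) {w : ℂ} (hw : ‖w‖ < 1) :
    (1 - w) * S a q w = (1 - a * w) * S a q (q * w) := by
  have hqw : ‖q * w‖ < 1 := by
    rw [norm_mul]
    calc ‖q‖ * ‖w‖ ≤ 1 * ‖w‖ := mul_le_mul_of_nonneg_right hq.le (norm_nonneg w)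
      _ < 1 := by simpa using hw
  have hA1 : Summable (fun m => c a q m * w ^ m) := summable_terms hq hw
  have hA2 : Summable (fun m => c a q m * (q * w) ^ m) := summable_terms hq hqw
  set A1 : ℕ → ℂ := fun m => c a q m * w ^ m with hA1def
  set A2 : ℕ → ℂ := fun m => c a q m * (q * w) ^ m with hA2def
  have hu : Summable (fun m => A1 m - A2 m) := hA1.sub hA2
  have hv : Summable (fun m => w * A1 m - a * w * A2 m) :=
    (hA1.mul_left w).sub (hA2.mul_left (a * w))
  have key : ∀ m, A1 (m + 1) - A2 (m + 1) = w * A1 m - a * w * A2 m := by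
    intro m
    have hrec := c_rec hq a m
    simp only [hA1def, hA2def]
    rw [mul_pow, mul_pow]
    linear_combination (w ^ (m + 1)) * hrec
  have hshift : ∑' m, (A1 m - A2 m) = ∑' m, (w * A1 m - a * w * A2 m) := by
    rw [hu.tsum_eq_zero_add]
    have h0 : A1 0 - A2 0 = 0 := by simp [hA1def, hA2def]
    rw [h0, zero_add]
    exact tsum_congr key
  have expand : ∑' m, (A1 m - A2 m) = S a q w - S a q (q * w) := by
    rw [hA1.tsum_sub hA2]; rfl
  have expand2 : ∑' m, (w * A1 m - a * w * A2 m)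
      = w * S a q w - a * w * S a q (q * w) := by
    rw [(hA1.mul_left w).tsum_sub (hA2.mul_left (a * w)), tsum_mul_left, tsum_mul_left]; rfl
  rw [expand, expand2] at hshift
  linear_combination hshift

/-- `S (q^n z) → 1`. -/
lemma tendsto_S_one {a q z : ℂ} (hq : ‖q‖ < 1) (hz : ‖z‖ < 1) :
    Tendsto (fun n : ℕ => S a q (q ^ n * z)) atTop (𝓝 1) := by
  have hbound : Summable (fun m => ‖c a q m * z ^ m‖) := summable_norm hq hz
  have h := tendsto_tsum_of_dominated_convergence (𝓕 := atTop)
      (f := fun (n : ℕ) (m : ℕ) => c a q m * (q ^ n * z) ^ m)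
      (g := fun m : ℕ => if m = 0 then 1 else 0)
      (bound := fun m => ‖c a q m * z ^ m‖) hbound ?_ ?_
  · have hg : ∑' m : ℕ, (if m = 0 then (1 : ℂ) else 0) = 1 := tsum_ite_eq 0 1
    rw [hg] at h
    exact h
  · intro m
    rcases Nat.eq_zero_or_pos m with hm | hm
    · subst hm
      have h0 : c a q 0 = 1 := by simp [c]
      simp only [pow_zero, mul_one, if_pos rfl, h0]
      exact tendsto_const_nhds
    · have hne : m ≠ 0 := hm.ne'
      simp only [hne, if_false]
      have heq : ∀ n : ℕ, c a q m * (q ^ n * z) ^ m = (c a q m * z ^ m) * (q ^ m) ^ n := by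
        intro n
        rw [mul_pow, ← pow_mul, ← pow_mul, Nat.mul_comm]
        ring
      have hqm : ‖q ^ m‖ < 1 := by
        rw [norm_pow]
        calc ‖q‖ ^ m ≤ ‖q‖ ^ 1 :=
              pow_le_pow_of_le_one (norm_nonneg q) hq.le hm
          _ < 1 := by simpa using hq
      have := Tendsto.const_mul (c a q m * z ^ m)
        (tendsto_pow_atTop_nhds_zero_of_norm_lt_one hqm)
      rw [mul_zero] at this
      exact this.congr fun n => (heq n).symm
  · refine Eventually.of_forall fun n => fun m => ?_
    simp only [norm_mul, norm_pow]
    have hb : ‖q‖ ^ n * ‖z‖ ≤ ‖z‖ := by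
      calc ‖q‖ ^ n * ‖z‖ ≤ 1 * ‖z‖ :=
            mul_le_mul_of_nonneg_right (pow_le_one₀ (norm_nonneg q) hq.le) (norm_nonneg z)
        _ = ‖z‖ := one_mul _
    exact mul_le_mul_of_nonneg_left (pow_le_pow_left₀ (by positivity) hb m) (norm_nonneg _)

lemma iterate {a q z : ℂ} (hq : ‖q‖ < 1) (hz : ‖z‖ < 1) (n : ℕ) :
    (∏ k ∈ Finset.range n, (1 - z * q ^ k)) * S a q z
      = (∏ k ∈ Finset.range n, (1 - a * z * q ^ k)) * S a q (q ^ n * z) := by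
  induction n with
  | zero => simp
  | succ n ih =>
    have hw : ‖q ^ n * z‖ < 1 := by
      rw [norm_mul, norm_pow]
      calc ‖q‖ ^ n * ‖z‖ ≤ 1 * ‖z‖ :=
            mul_le_mul_of_nonneg_right (pow_le_one₀ (norm_nonneg q) hq.le) (norm_nonneg z)
        _ < 1 := by simpa using hz
    have hw2 := funcEq (a := a) hq hw
    have harg : q * (q ^ n * z) = q ^ (n + 1) * z := by ring
    rw [harg] at hw2
    rw [Finset.prod_range_succ, Finset.prod_range_succ]
    linear_combination (1 - z * q ^ n) * ih
      + (∏ k ∈ Finset.range n, (1 - a * z * q ^ k)) * hw2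

lemma hasProd_one_sub {q : ℂ} (hq : ‖q‖ < 1) (w : ℂ) (hw : Summable fun k : ℕ => w * q ^ k) :
    HasProd (fun k : ℕ => 1 - w * q ^ k) (∏' k : ℕ, (1 - w * q ^ k)) := by
  by_cases hne : ∀ k : ℕ, (1 : ℂ) - w * q ^ k ≠ 0
  · have hlog : Summable fun k : ℕ => Complex.log (1 - w * q ^ k) := hw.clog_one_sub
    have := Complex.multipliable_of_summable_log hlog
    exact this.hasProd
  · push_neg at hne
    obtain ⟨k0, hk0⟩ := hne
    have hzero : HasProd (fun k : ℕ => 1 - w * q ^ k) 0 := by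
      rw [HasProd]
      have hev : ∀ᶠ s : Finset ℕ in atTop, (∏ i ∈ s, (1 - w * q ^ i)) = 0 := by
        filter_upwards [eventually_ge_atTop ({k0} : Finset ℕ)] with s hs
        exact Finset.prod_eq_zero (hs (Finset.mem_singleton_self k0)) hk0
      exact Tendsto.congr' (EventuallyEq.symm hev) tendsto_const_nhds
    rw [hzero.tprod_eq]
    exact hzero

lemma tprod_den_ne_zero {q z : ℂ} (hq : ‖q‖ < 1) (hz : ‖z‖ < 1) :
    (∏' k : ℕ, (1 - z * q ^ k)) ≠ 0 := by
  have hne : ∀ k : ℕ, (1 : ℂ) - z * q ^ k ≠ 0 := by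
    intro k h
    have h1 : z * q ^ k = 1 := by linear_combination -h
    have := norm_mul_pow_lt_one hq hz k
    rw [h1] at this; simp at this
  have hw : Summable fun k : ℕ => z * q ^ k :=
    (summable_geometric_of_norm_lt_one hq).mul_left z
  have hlog : Summable fun k : ℕ => Complex.log (1 - z * q ^ k) := hw.clog_one_sub
  have h2 := Complex.cexp_tsum_eq_tprod (f := fun k : ℕ => 1 - z * q ^ k) hne hlog
  rw [← h2]
  exact Complex.exp_ne_zero _

end QBinAux

open QBinAux in
theorem q_binomial_theorem (a q z : ℂ) (hq : ‖q‖ < 1) (hz : ‖z‖ < 1) :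
    ∑' m : ℕ,
        ((∏ k ∈ Finset.range m, (1 - a * q ^ k)) /
          (∏ k ∈ Finset.range m, (1 - q * q ^ k))) * z ^ m
      = (∏' k : ℕ, (1 - a * z * q ^ k)) / (∏' k : ℕ, (1 - z * q ^ k)) := by
  have hgeo : Summable fun k : ℕ => q ^ k := summable_geometric_of_norm_lt_one hq
  have hD : HasProd (fun k : ℕ => 1 - z * q ^ k) (∏' k : ℕ, (1 - z * q ^ k)) :=
    hasProd_one_sub hq z (hgeo.mul_left z)
  have hN : HasProd (fun k : ℕ => 1 - a * z * q ^ k) (∏' k : ℕ, (1 - a * z * q ^ k)) :=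
    hasProd_one_sub hq (a * z) (hgeo.mul_left (a * z))
  have hDt := hD.tendsto_prod_nat
  have hNt := hN.tendsto_prod_nat
  have hlhs : Tendsto (fun n : ℕ => (∏ k ∈ Finset.range n, (1 - z * q ^ k)) * S a q z)
      atTop (𝓝 ((∏' k : ℕ, (1 - z * q ^ k)) * S a q z)) := hDt.mul_const _
  have hrhs : Tendsto
      (fun n : ℕ => (∏ k ∈ Finset.range n, (1 - a * z * q ^ k)) * S a q (q ^ n * z))
      atTop (𝓝 ((∏' k : ℕ, (1 - a * z * q ^ k)) * 1)) :=
    hNt.mul (tendsto_S_one hq hz)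
  have heq : (∏' k : ℕ, (1 - z * q ^ k)) * S a q z
      = (∏' k : ℕ, (1 - a * z * q ^ k)) * 1 := by
    apply tendsto_nhds_unique _ hrhs
    exact hlhs.congr fun n => iterate hq hz n
  have hDne := tprod_den_ne_zero hq hz
  have : S a q z = (∏' k : ℕ, (1 - a * z * q ^ k)) / (∏' k : ℕ, (1 - z * q ^ k)) := by
    rw [eq_div_iff hDne]
    linear_combination heq
  exact this
end

section
/- Let u = ∫₀^α dφ/√(1 − x² sin²φ), v = ∫₀^β dφ/√(1 − x² sin²φ), w = ∫₀^γ dφ/√(1 − x² sin²φ), where 0 < x < 1 and α, β, γ ∈ [0, π/2]. If cot α · cot β = cos γ/(sin α sin β) + √(1 − x² sin² γ), then u + v = w. -/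
open Real

noncomputable def Dell (x φ : ℝ) : ℝ := Real.sqrt (1 - x ^ 2 * Real.sin φ ^ 2)

lemma Dell_sq_pos {x : ℝ} (hx1 : x ^ 2 < 1) (φ : ℝ) : 0 < 1 - x ^ 2 * Real.sin φ ^ 2 := by
  nlinarith [Real.sin_sq_le_one φ, sq_nonneg x]

lemma Dell_pos {x : ℝ} (hx1 : x ^ 2 < 1) (φ : ℝ) : 0 < Dell x φ :=
  Real.sqrt_pos.mpr (Dell_sq_pos hx1 φ)

lemma Dell_sq {x : ℝ} (hx1 : x ^ 2 < 1) (φ : ℝ) : (Dell x φ) ^ 2 = 1 - x ^ 2 * Real.sin φ ^ 2 :=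
  Real.sq_sqrt (le_of_lt (Dell_sq_pos hx1 φ))

noncomputable def Fell (x s : ℝ) : ℝ := ∫ φ in (0:ℝ)..s, 1 / Dell x φ

lemma Fell_hasDerivAt {x : ℝ} (hx1 : x ^ 2 < 1) (t : ℝ) :
    HasDerivAt (Fell x) (1 / Dell x t) t := by
  have hc : Continuous (fun φ => 1 / Dell x φ) := by
    apply Continuous.div continuous_const
    · exact (continuous_const.sub (continuous_const.mul (Real.continuous_sin.pow 2))).sqrt
    · intro φ; exact (Dell_pos hx1 φ).ne'
  exact (hc.integral_hasStrictDerivAt 0 t).hasDerivAt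

/-- The implicit function. -/
noncomputable def bfun (x γ : ℝ) : ℝ → ℝ := fun t =>
  Real.arccos (Real.cos γ / Real.sqrt (1 - x ^ 2 * Real.sin γ ^ 2 * Real.sin t ^ 2))
    - Real.arctan (Real.sqrt (1 - x ^ 2 * Real.sin γ ^ 2) * Real.tan t)

section Aux

variable {x γ t : ℝ}

lemma sq_lt_one' (hx0 : 0 < x) (hx1 : x < 1) : x ^ 2 < 1 := by nlinarith

lemma k_sq_lt_one (hx1 : x ^ 2 < 1) : x ^ 2 * Real.sin γ ^ 2 < 1 := by
  nlinarith [Real.sin_sq_le_one γ, sq_nonneg x]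

lemma A_arg_pos (hx1 : x ^ 2 < 1) (t : ℝ) : 0 < 1 - x ^ 2 * Real.sin γ ^ 2 * Real.sin t ^ 2 := by
  nlinarith [Real.sin_sq_le_one γ, Real.sin_sq_le_one t, sq_nonneg x, sq_nonneg (x * Real.sin γ)]

lemma A_pos (hx1 : x ^ 2 < 1) (t : ℝ) :
    0 < Real.sqrt (1 - x ^ 2 * Real.sin γ ^ 2 * Real.sin t ^ 2) :=
  Real.sqrt_pos.mpr (A_arg_pos hx1 t)

lemma A_sq (hx1 : x ^ 2 < 1) (t : ℝ) :
    (Real.sqrt (1 - x ^ 2 * Real.sin γ ^ 2 * Real.sin t ^ 2)) ^ 2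
      = 1 - x ^ 2 * Real.sin γ ^ 2 * Real.sin t ^ 2 :=
  Real.sq_sqrt (A_arg_pos hx1 t).le

lemma e_sq (hx1 : x ^ 2 < 1) : (Real.sqrt (1 - x ^ 2 * Real.sin γ ^ 2)) ^ 2
    = 1 - x ^ 2 * Real.sin γ ^ 2 :=
  Real.sq_sqrt (by nlinarith [Real.sin_sq_le_one γ, sq_nonneg x])

lemma e_pos (hx1 : x ^ 2 < 1) : 0 < Real.sqrt (1 - x ^ 2 * Real.sin γ ^ 2) :=
  Real.sqrt_pos.mpr (by nlinarith [Real.sin_sq_le_one γ, sq_nonneg x])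

/-- `√(1 + (e tan t)²) = A t / cos t`. -/
lemma aux_sqrt (hx1 : x ^ 2 < 1) (ht : 0 < Real.cos t) :
    Real.sqrt (1 + (Real.sqrt (1 - x ^ 2 * Real.sin γ ^ 2) * Real.tan t) ^ 2)
      = Real.sqrt (1 - x ^ 2 * Real.sin γ ^ 2 * Real.sin t ^ 2) / Real.cos t := by
  have he := e_sq (γ := γ) hx1
  have hA := A_sq (γ := γ) hx1 t
  have hpy : Real.sin t ^ 2 = 1 - Real.cos t ^ 2 := (Real.sin_sq t)
  rw [show 1 + (Real.sqrt (1 - x ^ 2 * Real.sin γ ^ 2) * Real.tan t) ^ 2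
      = (Real.sqrt (1 - x ^ 2 * Real.sin γ ^ 2 * Real.sin t ^ 2) / Real.cos t) ^ 2 by
    rw [Real.tan_eq_sin_div_cos]
    field_simp
    linear_combination Real.sin t ^ 2 * he - hA + hpy]
  exact Real.sqrt_sq (by positivity)

lemma arctan_cos (hx1 : x ^ 2 < 1) (ht : 0 < Real.cos t) :
    Real.cos (Real.arctan (Real.sqrt (1 - x ^ 2 * Real.sin γ ^ 2) * Real.tan t))
      = Real.cos t / Real.sqrt (1 - x ^ 2 * Real.sin γ ^ 2 * Real.sin t ^ 2) := by
  rw [Real.cos_arctan, aux_sqrt hx1 ht]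
  rw [one_div_div]


lemma arctan_sin (hx1 : x ^ 2 < 1) (ht : 0 < Real.cos t) :
    Real.sin (Real.arctan (Real.sqrt (1 - x ^ 2 * Real.sin γ ^ 2) * Real.tan t))
      = Real.sqrt (1 - x ^ 2 * Real.sin γ ^ 2) * Real.sin t
          / Real.sqrt (1 - x ^ 2 * Real.sin γ ^ 2 * Real.sin t ^ 2) := by
  rw [Real.sin_arctan, aux_sqrt hx1 ht, Real.tan_eq_sin_div_cos]
  have hA := (A_pos (γ := γ) hx1 t).ne'
  field_simp

/-- `√(1 - (cos γ / A t)²) = sin γ * Dell x t / A t` (needs `0 ≤ γ ≤ π/2` i.e. `cos γ ≥ 0`). -/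
lemma aux_root (hx1 : x ^ 2 < 1) (hs : 0 ≤ Real.sin γ) :
    Real.sqrt (1 - (Real.cos γ / Real.sqrt (1 - x ^ 2 * Real.sin γ ^ 2 * Real.sin t ^ 2)) ^ 2)
      = Real.sin γ * Dell x t / Real.sqrt (1 - x ^ 2 * Real.sin γ ^ 2 * Real.sin t ^ 2) := by
  have hA := A_sq (γ := γ) hx1 t
  have hApos := A_pos (γ := γ) hx1 t
  have hd := Dell_sq hx1 t
  have hdpos := Dell_pos hx1 t
  have hc : Real.cos γ ^ 2 = 1 - Real.sin γ ^ 2 := Real.cos_sq' γ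
  rw [show 1 - (Real.cos γ / Real.sqrt (1 - x ^ 2 * Real.sin γ ^ 2 * Real.sin t ^ 2)) ^ 2
      = (Real.sin γ * Dell x t / Real.sqrt (1 - x ^ 2 * Real.sin γ ^ 2 * Real.sin t ^ 2)) ^ 2 by
    field_simp
    linear_combination hA - hc - Real.sin γ ^ 2 * hd]
  exact Real.sqrt_sq (by positivity)

lemma cos_bound (hx1 : x ^ 2 < 1) (hγ0 : 0 ≤ γ) (hγ1 : γ ≤ π / 2) :
    0 ≤ Real.cos γ / Real.sqrt (1 - x ^ 2 * Real.sin γ ^ 2 * Real.sin t ^ 2)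
      ∧ Real.cos γ / Real.sqrt (1 - x ^ 2 * Real.sin γ ^ 2 * Real.sin t ^ 2) ≤ 1 := by
  have hApos := A_pos (γ := γ) (t := t) hx1
  have hA := A_sq (γ := γ) hx1 t
  have hc0 : 0 ≤ Real.cos γ := Real.cos_nonneg_of_mem_Icc ⟨by linarith [Real.pi_pos], hγ1⟩
  have hc : Real.cos γ ^ 2 = 1 - Real.sin γ ^ 2 := Real.cos_sq' γ
  constructor
  · positivity
  · rw [div_le_one hApos]
    nlinarith [Dell_sq hx1 t, Dell_pos hx1 t, Real.sin_sq_le_one t, sq_nonneg (Real.sin γ), sq_nonneg x]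

lemma bfun_sin (hx1 : x ^ 2 < 1) (hγ0 : 0 ≤ γ) (hγ1 : γ ≤ π / 2)
    (ht : 0 < Real.cos t) (hs : 0 ≤ Real.sin γ) :
    Real.sin (bfun x γ t)
      = (Real.sin γ * Dell x t * Real.cos t
          - Real.cos γ * Real.sqrt (1 - x ^ 2 * Real.sin γ ^ 2) * Real.sin t)
        / (1 - x ^ 2 * Real.sin γ ^ 2 * Real.sin t ^ 2) := by
  have hApos := A_pos (γ := γ) (t := t) hx1
  have hA := A_sq (γ := γ) hx1 t
  obtain ⟨hb0, hb1⟩ := cos_bound (γ := γ) (t := t) hx1 hγ0 hγ1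
  rw [bfun, Real.sin_sub, Real.sin_arccos, Real.cos_arccos (by linarith) hb1,
    aux_root hx1 hs, arctan_cos hx1 ht, arctan_sin hx1 ht]
  rw [← hA, Real.sqrt_sq hApos.le]
  field_simp

lemma bfun_Dell (hx1 : x ^ 2 < 1) (hγ0 : 0 ≤ γ) (hγ1 : γ ≤ π / 2)
    (ht : 0 < Real.cos t) (ht0 : 0 ≤ Real.sin t) (hs : 0 ≤ Real.sin γ) :
    Dell x (bfun x γ t)
      = (Real.cos γ * x ^ 2 * Real.sin γ * Real.sin t * Real.cos t
          + Real.sqrt (1 - x ^ 2 * Real.sin γ ^ 2) * Dell x t)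
        / (1 - x ^ 2 * Real.sin γ ^ 2 * Real.sin t ^ 2) := by
  have hApos := A_arg_pos (γ := γ) (t := t) hx1
  have hd := Dell_sq hx1 t
  have hdpos := Dell_pos hx1 t
  have he := e_sq (γ := γ) hx1
  have hepos := e_pos (γ := γ) hx1
  have hc : Real.cos γ ^ 2 = 1 - Real.sin γ ^ 2 := Real.cos_sq' γ
  have hct : Real.cos t ^ 2 = 1 - Real.sin t ^ 2 := Real.cos_sq' t
  have hc0 : 0 ≤ Real.cos γ := Real.cos_nonneg_of_mem_Icc ⟨by linarith [Real.pi_pos], hγ1⟩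
  rw [Dell, bfun_sin hx1 hγ0 hγ1 ht hs]
  rw [show 1 - x ^ 2 * ((Real.sin γ * Dell x t * Real.cos t
        - Real.cos γ * Real.sqrt (1 - x ^ 2 * Real.sin γ ^ 2) * Real.sin t)
        / (1 - x ^ 2 * Real.sin γ ^ 2 * Real.sin t ^ 2)) ^ 2
      = ((Real.cos γ * x ^ 2 * Real.sin γ * Real.sin t * Real.cos t
          + Real.sqrt (1 - x ^ 2 * Real.sin γ ^ 2) * Dell x t)
        / (1 - x ^ 2 * Real.sin γ ^ 2 * Real.sin t ^ 2)) ^ 2 by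
    have key : ∀ S T C CT D E : ℝ, D^2 = 1 - x^2*T^2 → E^2 = 1 - x^2*S^2 →
        C^2 = 1 - S^2 → CT^2 = 1 - T^2 →
        (1 - x^2*S^2*T^2)^2 - x^2*(S*D*CT - C*E*T)^2 = (C*x^2*S*T*CT + E*D)^2 := by
      intro S T C CT D E hd he hc hct
      linear_combination (-(x^2*S^2*CT^2) - E^2) * hd + (-(x^2*C^2*T^2) - (1 - x^2*T^2)) * he
        + (-(x^2*T^2*(1 - x^2*S^2)) - x^4*S^2*T^2*CT^2) * hc
        + (-(x^2*S^2*(1 - x^2*T^2)) - x^4*S^2*T^2*(1 - S^2)) * hct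
    have K := key (Real.sin γ) (Real.sin t) (Real.cos γ) (Real.cos t) (Dell x t)
      (Real.sqrt (1 - x ^ 2 * Real.sin γ ^ 2)) hd he hc hct
    field_simp
    linear_combination K]
  exact Real.sqrt_sq (by positivity)

lemma bfun_hasDerivAt (hx1 : x ^ 2 < 1) (hγ0 : 0 ≤ γ) (hγ1 : γ ≤ π / 2)
    (hs : 0 < Real.sin γ) (ht0 : 0 ≤ Real.sin t) (htc : 0 < Real.cos t) :
    HasDerivAt (bfun x γ) (-(Dell x (bfun x γ t) / Dell x t)) t := by
  have hApos := A_pos (γ := γ) (t := t) hx1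
  have hA := A_sq (γ := γ) hx1 t
  have hA0 := A_arg_pos (γ := γ) (t := t) hx1
  have hd := Dell_sq hx1 t
  have hdpos := Dell_pos hx1 t
  have he := e_sq (γ := γ) hx1
  have hepos := e_pos (γ := γ) hx1
  have hc : Real.cos γ ^ 2 = 1 - Real.sin γ ^ 2 := Real.cos_sq' γ
  have hc0 : 0 ≤ Real.cos γ := Real.cos_nonneg_of_mem_Icc ⟨by linarith [Real.pi_pos], hγ1⟩
  set A := Real.sqrt (1 - x ^ 2 * Real.sin γ ^ 2 * Real.sin t ^ 2) with hAdef
  -- inner derivative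
  have h1 : HasDerivAt (fun u : ℝ => Real.sin u ^ 2) ((2 : ℕ) * Real.sin t ^ 1 * Real.cos t) t :=
    (Real.hasDerivAt_sin t).pow 2
  have h2 : HasDerivAt (fun u : ℝ => 1 - x ^ 2 * Real.sin γ ^ 2 * Real.sin u ^ 2)
      (-(x ^ 2 * Real.sin γ ^ 2 * ((2 : ℕ) * Real.sin t ^ 1 * Real.cos t))) t :=
    (h1.const_mul (x ^ 2 * Real.sin γ ^ 2)).const_sub 1
  have hAder : HasDerivAt (fun u => Real.sqrt (1 - x ^ 2 * Real.sin γ ^ 2 * Real.sin u ^ 2))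
      ((-(x ^ 2 * Real.sin γ ^ 2 * ((2 : ℕ) * Real.sin t ^ 1 * Real.cos t))) / (2 * A)) t :=
    h2.sqrt hA0.ne'
  have hq : HasDerivAt (fun u => Real.cos γ / Real.sqrt (1 - x ^ 2 * Real.sin γ ^ 2 * Real.sin u ^ 2))
      ((0 * A - Real.cos γ * ((-(x ^ 2 * Real.sin γ ^ 2 * ((2 : ℕ) * Real.sin t ^ 1 * Real.cos t))) / (2 * A))) / A ^ 2)
      t := (hasDerivAt_const t (Real.cos γ)).div hAder hApos.ne'
  -- arccos composition
  have hz1 : Real.cos γ / A < 1 := by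
    rw [div_lt_one hApos]
    nlinarith [Dell_sq_pos hx1 t, mul_pos (mul_pos hs hs) (Dell_sq_pos hx1 t)]
  have hz0 : (0:ℝ) ≤ Real.cos γ / A := by positivity
  have harc := Real.hasDerivAt_arccos (x := Real.cos γ / A) (by linarith) (ne_of_lt hz1)
  have hcomp1 := harc.comp t hq
  -- arctan composition
  have htan := Real.hasDerivAt_tan htc.ne'
  have hmul := htan.const_mul (Real.sqrt (1 - x ^ 2 * Real.sin γ ^ 2))
  have harctan := hmul.arctan
  have total := hcomp1.sub harctan
  have heq : 1 + (Real.sqrt (1 - x ^ 2 * Real.sin γ ^ 2) * Real.tan t) ^ 2 = (A / Real.cos t) ^ 2 := by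
    rw [← aux_sqrt (γ := γ) hx1 htc, Real.sq_sqrt (by positivity)]
  have haux1 : Real.sqrt (1 - (Real.cos γ / A) ^ 2) = Real.sin γ * Dell x t / A := by
    rw [hAdef]; exact aux_root hx1 hs.le
  have hbD := bfun_Dell hx1 hγ0 hγ1 htc ht0 hs.le
  rw [← hA] at hbD
  refine total.congr_deriv ?_
  rw [hbD, haux1, heq]
  have h2ne : Real.cos t ^ 2 ≠ 0 := by positivity
  field_simp
  ring
end Aux

theorem elliptic_addition_theorem (x α β γ : ℝ)
    (hx : x ∈ Set.Ioo (0:ℝ) 1)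
    (hα : α ∈ Set.Ioo 0 (π / 2)) (hβ : β ∈ Set.Ioo 0 (π / 2))
    (hγ : γ ∈ Set.Icc 0 (π / 2))
    (hcond : (Real.cos α / Real.sin α) * (Real.cos β / Real.sin β)
      = Real.cos γ / (Real.sin α * Real.sin β)
        + Real.sqrt (1 - x ^ 2 * Real.sin γ ^ 2)) :
    (∫ φ in (0:ℝ)..α, 1 / Real.sqrt (1 - x ^ 2 * Real.sin φ ^ 2))
      + (∫ φ in (0:ℝ)..β, 1 / Real.sqrt (1 - x ^ 2 * Real.sin φ ^ 2))
      = ∫ φ in (0:ℝ)..γ, 1 / Real.sqrt (1 - x ^ 2 * Real.sin φ ^ 2) := by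
  obtain ⟨hx0, hx1⟩ := hx
  obtain ⟨hα0, hα1⟩ := hα
  obtain ⟨hβ0, hβ1⟩ := hβ
  obtain ⟨hγ0, hγ1⟩ := hγ
  have hx2 : x ^ 2 < 1 := by nlinarith
  have hπ := Real.pi_pos
  have hsα : 0 < Real.sin α := Real.sin_pos_of_pos_of_lt_pi hα0 (by linarith)
  have hsβ : 0 < Real.sin β := Real.sin_pos_of_pos_of_lt_pi hβ0 (by linarith)
  have hcα : 0 < Real.cos α := Real.cos_pos_of_mem_Ioo ⟨by linarith, hα1⟩
  have hcβ : 0 < Real.cos β := Real.cos_pos_of_mem_Ioo ⟨by linarith, hβ1⟩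
  have hcond' : Real.cos α * Real.cos β
      - Real.sqrt (1 - x ^ 2 * Real.sin γ ^ 2) * (Real.sin α * Real.sin β) = Real.cos γ := by
    field_simp at hcond
    linarith [hcond]
  have hsγ : 0 < Real.sin γ := by
    rcases eq_or_lt_of_le hγ0 with h | h
    · exfalso
      rw [← h] at hcond'
      simp [Real.sqrt_one] at hcond'
      nlinarith [Real.cos_le_one α, Real.cos_le_one β, mul_pos hsα hsβ]
    · exact Real.sin_pos_of_pos_of_lt_pi h (by linarith)
  -- value at α
  have htanα : 0 ≤ Real.tan α := by
    rw [Real.tan_eq_sin_div_cos]; positivity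
  have hφ0 : 0 ≤ Real.arctan (Real.sqrt (1 - x ^ 2 * Real.sin γ ^ 2) * Real.tan α) := by
    rw [← Real.arctan_zero]
    exact Real.arctan_strictMono.monotone (by positivity)
  have hφlt := Real.arctan_lt_pi_div_two (Real.sqrt (1 - x ^ 2 * Real.sin γ ^ 2) * Real.tan α)
  obtain ⟨hb0', hb1'⟩ := cos_bound (γ := γ) (t := α) hx2 hγ0 hγ1
  have hApos := A_pos (γ := γ) (t := α) hx2
  have hcoseq : Real.cos (Real.arccos (Real.cos γ
        / Real.sqrt (1 - x ^ 2 * Real.sin γ ^ 2 * Real.sin α ^ 2)))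
      = Real.cos (β + Real.arctan (Real.sqrt (1 - x ^ 2 * Real.sin γ ^ 2) * Real.tan α)) := by
    rw [Real.cos_arccos (by linarith) hb1', Real.cos_add,
      arctan_cos hx2 hcα, arctan_sin hx2 hcα]
    field_simp
    linear_combination -hcond'
  have hbα : bfun x γ α = β := by
    have hinj := Real.injOn_cos ⟨Real.arccos_nonneg _, Real.arccos_le_pi _⟩
      (⟨by linarith, by linarith⟩ : β + Real.arctan (Real.sqrt (1 - x ^ 2 * Real.sin γ ^ 2)
        * Real.tan α) ∈ Set.Icc 0 π) hcoseq
    simp only [bfun]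
    rw [hinj]; ring
  have hbz : bfun x γ 0 = γ := by
    simp only [bfun]
    simp only [Real.sin_zero, Real.tan_zero, mul_zero, ne_eq, OfNat.ofNat_ne_zero,
      not_false_eq_true, zero_pow, sub_zero, Real.sqrt_one, div_one, Real.arctan_zero]
    rw [Real.arccos_cos hγ0 (by linarith)]
  -- constancy
  have hder : ∀ t ∈ Set.Icc (0:ℝ) α, HasDerivAt (fun u => Fell x u + Fell x (bfun x γ u)) 0 t := by
    rintro t ⟨ht0, ht1⟩
    have hst : 0 ≤ Real.sin t := Real.sin_nonneg_of_nonneg_of_le_pi ht0 (by linarith)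
    have hct : 0 < Real.cos t := Real.cos_pos_of_mem_Ioo ⟨by linarith, by linarith⟩
    have h2 := (Fell_hasDerivAt hx2 (bfun x γ t)).comp t
      (bfun_hasDerivAt hx2 hγ0 hγ1 hsγ hst hct)
    have h3 := (Fell_hasDerivAt hx2 t).add h2
    refine h3.congr_deriv ?_
    have hd1 := Dell_pos hx2 t
    have hd2 := Dell_pos hx2 (bfun x γ t)
    field_simp
    ring
  have hconst := constant_of_has_deriv_right_zero
    (f := fun u => Fell x u + Fell x (bfun x γ u)) (a := 0) (b := α)
    (fun t ht => ((hder t ht).continuousAt).continuousWithinAt)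
    (fun t ht => (hder t ⟨ht.1, ht.2.le⟩).hasDerivWithinAt)
  have hfin := hconst α ⟨hα0.le, le_refl α⟩
  have hF0 : Fell x 0 = 0 := intervalIntegral.integral_same
  simp only [hbα, hbz, hF0, zero_add] at hfin
  simpa only [Fell, Dell] using hfin
end

section
/- For |x| < 1, (π/2) ∫₀^{π/2} dφ/√(1 + x sin φ) = ∫₀^{π/2} arccos(x sin²φ)/√(1 − x² sin⁴φ) dφ. -/
open Real

lemma Dpos (m s co : ℝ) (hm0 : 0 < m) (hpy : s^2 + co^2 = 1) :
    0 < co ^ 2 + m * s ^ 2 := by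
  rcases le_total m 1 with h | h
  · nlinarith [mul_nonneg (sub_nonneg.mpr h) (sq_nonneg co)]
  · nlinarith [mul_nonneg (sub_nonneg.mpr h) (sq_nonneg s)]

lemma algA (m s co : ℝ) (hm0 : 0 < m) (hpy : s^2 + co^2 = 1) :
    1 / (1 + (m^2 - 1) * s ^ 2) =
    (1 + 1 / (1 + ((m - 1) * s * co / (co ^ 2 + m * s ^ 2)) ^ 2) *
      (((m - 1) * (co ^ 2 - s ^ 2) * (co ^ 2 + m * s ^ 2) -
        (m - 1) * s * co * -(2 * (1 - m) * s * co)) /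
        (co ^ 2 + m * s ^ 2) ^ 2)) / m := by
  have hD : 0 < co ^ 2 + m * s ^ 2 := Dpos m s co hm0 hpy
  have hA : 0 < 1 + (m^2 - 1) * s ^ 2 := by
    have := Dpos (m^2) s co (by positivity) hpy
    nlinarith
  have hq : 0 < 1 + ((m - 1) * s * co / (co ^ 2 + m * s ^ 2)) ^ 2 := by positivity
  rw [div_eq_div_iff hA.ne' (show (m:ℝ) ≠ 0 from hm0.ne')]
  field_simp
  ring_nf
  linear_combination (-m^3*s^2*co^2 + m*s^2*co^2 - m^3*s^4 + m*s^4) * hpy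

lemma lemA {c : ℝ} (hc : -1 < c) :
    ∫ θ in (0:ℝ)..(π/2), 1 / (1 + c * Real.sin θ ^ 2)
      = π / (2 * Real.sqrt (1 + c)) := by
  have h1c : (0:ℝ) < 1 + c := by linarith
  set m := Real.sqrt (1 + c) with hm
  have hm0 : 0 < m := Real.sqrt_pos.mpr h1c
  have hm2 : m ^ 2 = 1 + c := Real.sq_sqrt h1c.le
  have hc' : c = m ^ 2 - 1 := by linarith
  have hden : ∀ θ : ℝ, 0 < 1 + c * Real.sin θ ^ 2 := by
    intro θ
    rcases le_total c 0 with h | h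
    · nlinarith [mul_nonneg (neg_nonneg.mpr h) (sub_nonneg.mpr (Real.sin_sq_le_one θ))]
    · nlinarith [mul_nonneg h (sq_nonneg (Real.sin θ))]
  have hD : ∀ θ : ℝ, 0 < Real.cos θ ^ 2 + m * Real.sin θ ^ 2 := fun θ =>
    Dpos m (Real.sin θ) (Real.cos θ) hm0 (Real.sin_sq_add_cos_sq θ)
  have key : ∀ θ : ℝ, HasDerivAt
      (fun θ => (θ + Real.arctan ((m - 1) * Real.sin θ * Real.cos θ /
        (Real.cos θ ^ 2 + m * Real.sin θ ^ 2))) / m)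
      (1 / (1 + c * Real.sin θ ^ 2)) θ := by
    intro θ
    have hs := Real.hasDerivAt_sin θ
    have hcth := Real.hasDerivAt_cos θ
    have h1 : HasDerivAt (fun θ => (m - 1) * Real.sin θ * Real.cos θ)
        ((m - 1) * (Real.cos θ ^ 2 - Real.sin θ ^ 2)) θ := by
      have := ((hs.const_mul (m - 1)).mul hcth)
      refine this.congr_deriv ?_
      ring
    have h2 : HasDerivAt (fun θ => Real.cos θ ^ 2 + m * Real.sin θ ^ 2)
        (-(2 * (1 - m) * Real.sin θ * Real.cos θ)) θ := by
      have := ((hcth.pow 2).add ((hs.pow 2).const_mul m))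
      refine this.congr_deriv ?_
      ring_nf
    have h3 := (h1.div h2 (ne_of_gt (hD θ)))
    have h4 := ((hasDerivAt_id θ).add h3.arctan).div_const m
    refine h4.congr_deriv (Eq.symm ?_)
    rw [hc']
    exact algA m (Real.sin θ) (Real.cos θ) hm0 (Real.sin_sq_add_cos_sq θ)
  have hcont : Continuous fun θ : ℝ => 1 / (1 + c * Real.sin θ ^ 2) := by
    apply Continuous.div continuous_const
    · exact continuous_const.add (continuous_const.mul (Real.continuous_sin.pow 2))
    · intro θ; exact ne_of_gt (hden θ)
  rw [intervalIntegral.integral_eq_sub_of_hasDerivAt (fun θ _ => key θ)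
    (hcont.intervalIntegrable 0 (π/2))]
  simp [Real.sin_pi_div_two, Real.cos_pi_div_two, Real.arctan_zero]
  ring

lemma algB (t a b s2 c2 : ℝ) (ha0 : 0 < a) (hb0 : 0 < b) (hc2 : 0 < c2)
    (hpy : s2^2 + c2^2 = 1) (ha2 : a^2 = 1+t) (hb2 : b^2 = 1-t) :
    1 / (1 + t * (2*c2^2 - 1)) =
    2/(a*b) * (1/(1+(b*s2/(a*c2))^2) *
      ((b*(c2*(1/2))*(a*c2) - b*s2*(a*(-s2*(1/2))))/(a*c2)^2)) := by
  have hA : 1 + t * (2*c2^2 - 1) = a^2*c2^2 + b^2*s2^2 := by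
    linear_combination (-c2^2)*ha2 - s2^2*hb2 + (t-1)*hpy
  have hA0 : 0 < 1 + t * (2*c2^2 - 1) := by
    rw [hA]; positivity
  have hq : 0 < 1 + (b*s2/(a*c2))^2 := by positivity
  field_simp
  ring_nf
  linear_combination c2^2*ha2 + s2^2*hb2 - 2*t*c2^2*hpy


lemma lemB {t : ℝ} (ht : |t| < 1) :
    ∫ θ in (0:ℝ)..(π/2), 1 / (1 + t * Real.cos θ)
      = Real.arccos t / Real.sqrt (1 - t ^ 2) := by
  obtain ⟨ht1, ht2⟩ := abs_lt.mp ht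
  have h1t : (0:ℝ) < 1 + t := by linarith
  have h1t' : (0:ℝ) < 1 - t := by linarith
  set a := Real.sqrt (1 + t) with hadef
  set b := Real.sqrt (1 - t) with hbdef
  have ha0 : 0 < a := Real.sqrt_pos.mpr h1t
  have hb0 : 0 < b := Real.sqrt_pos.mpr h1t'
  have ha2 : a ^ 2 = 1 + t := Real.sq_sqrt h1t.le
  have hb2 : b ^ 2 = 1 - t := Real.sq_sqrt h1t'.le
  have hden : ∀ θ : ℝ, 0 < 1 + t * Real.cos θ := by
    intro θ
    rcases le_total t 0 with h | h
    · nlinarith [Real.cos_le_one θ, mul_nonneg (neg_nonneg.mpr h) (sub_nonneg.mpr (Real.cos_le_one θ))]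
    · nlinarith [Real.neg_one_le_cos θ, mul_nonneg h (sub_nonneg.mpr (Real.neg_one_le_cos θ))]
  have key : ∀ θ ∈ Set.uIcc (0:ℝ) (π/2), HasDerivAt
      (fun θ => 2 / (a * b) * Real.arctan (b * Real.sin (θ/2) / (a * Real.cos (θ/2))))
      (1 / (1 + t * Real.cos θ)) θ := by
    intro θ hθ
    rw [Set.uIcc_of_le (by positivity)] at hθ
    have hc2 : 0 < Real.cos (θ/2) := by
      apply Real.cos_pos_of_mem_Ioo
      constructor
      · nlinarith [hθ.1, Real.pi_pos]
      · nlinarith [hθ.2, Real.pi_pos]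
    have hhalf : HasDerivAt (fun θ : ℝ => θ/2) (1/2 : ℝ) θ := (hasDerivAt_id θ).div_const 2
    have hs : HasDerivAt (fun θ => Real.sin (θ/2)) (Real.cos (θ/2) * (1/2)) θ :=
      by exact (Real.hasDerivAt_sin (θ/2)).comp θ hhalf
    have hco : HasDerivAt (fun θ => Real.cos (θ/2)) (-Real.sin (θ/2) * (1/2)) θ :=
      by exact (Real.hasDerivAt_cos (θ/2)).comp θ hhalf
    have hN : HasDerivAt (fun θ => b * Real.sin (θ/2)) (b * (Real.cos (θ/2) * (1/2))) θ :=
      hs.const_mul b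
    have hD : HasDerivAt (fun θ => a * Real.cos (θ/2)) (a * (-Real.sin (θ/2) * (1/2))) θ :=
      hco.const_mul a
    have h3 := ((hN.div hD (by positivity)).arctan).const_mul (2 / (a * b))
    refine h3.congr_deriv (Eq.symm ?_)
    have hcosθ : Real.cos θ = 2 * Real.cos (θ/2) ^ 2 - 1 := by
      rw [← Real.cos_two_mul]
      congr 1; ring
    rw [hcosθ]
    exact algB t a b (Real.sin (θ/2)) (Real.cos (θ/2)) ha0 hb0 hc2
      (Real.sin_sq_add_cos_sq (θ/2)) ha2 hb2
  have hcont : Continuous fun θ : ℝ => 1 / (1 + t * Real.cos θ) := by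
    apply Continuous.div continuous_const
    · exact continuous_const.add (continuous_const.mul Real.continuous_cos)
    · intro θ; exact ne_of_gt (hden θ)
  rw [intervalIntegral.integral_eq_sub_of_hasDerivAt key (hcont.intervalIntegrable 0 (π/2))]
  have harc : Real.arccos t = 2 * Real.arctan (b / a) := by
    have hba : 0 < b / a := by positivity
    have h1 : 0 < Real.arctan (b / a) := by
      rw [← Real.arctan_zero]
      exact Real.arctan_strictMono hba
    have h2 : Real.arctan (b / a) < π / 2 := Real.arctan_lt_pi_div_two _
    have hcos : Real.cos (2 * Real.arctan (b / a)) = t := by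
      rw [Real.cos_two_mul, Real.cos_arctan]
      have h3 : (0:ℝ) < 1 + (b/a)^2 := by positivity
      rw [div_pow, one_pow, Real.sq_sqrt h3.le]
      field_simp
      linear_combination (1 - t) * ha2 - (1 + t) * hb2
    nth_rewrite 1 [← hcos]
    rw [Real.arccos_cos (by linarith) (by linarith)]
  have hsq : Real.sqrt (1 - t ^ 2) = a * b := by
    rw [hadef, hbdef, ← Real.sqrt_mul h1t.le]
    congr 1; ring
  rw [harc, hsq]
  have h44 : (π/2/2 : ℝ) = π/4 := by ring
  have hs4 : Real.sin (π/2/2) = Real.cos (π/2/2) := by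
    rw [h44, Real.sin_pi_div_four, Real.cos_pi_div_four]
  have hc4 : Real.cos (π/2/2) ≠ 0 := by
    rw [h44, Real.cos_pi_div_four]
    positivity
  rw [hs4]
  have hba : b * Real.cos (π/2/2) / (a * Real.cos (π/2/2)) = b / a :=
    mul_div_mul_right _ _ hc4
  rw [hba]
  norm_num [Real.arctan_zero]
  ring

lemma one_add_pos {x c : ℝ} (hx : |x| < 1) (hc : |c| ≤ 1) : 0 < 1 + x * c := by
  have h : |x * c| ≤ |x| := by
    rw [abs_mul]
    exact mul_le_of_le_one_right (abs_nonneg x) hc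
  have h2 := (abs_lt.mp (lt_of_le_of_lt h hx)).1
  linarith

lemma abs_sin_le_one' (φ : ℝ) : |Real.sin φ| ≤ 1 :=
  abs_le.mpr ⟨Real.neg_one_le_sin φ, Real.sin_le_one φ⟩

lemma swapInt (f : ℝ → ℝ → ℝ) (hf : Continuous (Function.uncurry f)) {b : ℝ} (hb : 0 ≤ b) :
    ∫ u in (0:ℝ)..b, ∫ v in (0:ℝ)..b, f u v = ∫ v in (0:ℝ)..b, ∫ u in (0:ℝ)..b, f u v := by
  simp only [intervalIntegral.integral_of_le hb]
  have hint : MeasureTheory.Integrable (Function.uncurry f)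
      ((MeasureTheory.volume.restrict (Set.Ioc (0:ℝ) b)).prod
        (MeasureTheory.volume.restrict (Set.Ioc (0:ℝ) b))) := by
    rw [MeasureTheory.Measure.prod_restrict, ← MeasureTheory.Measure.volume_eq_prod]
    have h1 : MeasureTheory.IntegrableOn (Function.uncurry f)
        (Set.Icc (0:ℝ) b ×ˢ Set.Icc (0:ℝ) b) := by
      exact hf.continuousOn.integrableOn_compact (isCompact_Icc.prod isCompact_Icc)
    exact h1.mono_set (Set.prod_mono Set.Ioc_subset_Icc_self Set.Ioc_subset_Icc_self)
  exact MeasureTheory.integral_integral_swap hint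

theorem ramanujan_arccos_integral (x : ℝ) (hx : |x| < 1) :
    (π / 2) * ∫ φ in (0:ℝ)..(π / 2), 1 / Real.sqrt (1 + x * Real.sin φ)
      = ∫ φ in (0:ℝ)..(π / 2),
          Real.arccos (x * Real.sin φ ^ 2) / Real.sqrt (1 - x ^ 2 * Real.sin φ ^ 4) := by
  have hπ := Real.pi_pos
  -- LHS as a double integral
  have hL : ∀ φ : ℝ, 1 / Real.sqrt (1 + x * Real.sin φ)
      = (2/π) * ∫ θ in (0:ℝ)..(π/2), 1 / (1 + (x * Real.sin φ) * Real.sin θ ^ 2) := by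
    intro φ
    have hpos : 0 < 1 + x * Real.sin φ := one_add_pos hx (abs_sin_le_one' φ)
    have hc : -1 < x * Real.sin φ := by linarith
    rw [lemA hc]
    have hs : (0:ℝ) < Real.sqrt (1 + x * Real.sin φ) := Real.sqrt_pos.mpr hpos
    field_simp
  -- RHS integrand via lemB
  have hR : ∀ φ : ℝ, Real.arccos (x * Real.sin φ ^ 2) / Real.sqrt (1 - x ^ 2 * Real.sin φ ^ 4)
      = ∫ θ in (0:ℝ)..(π/2), 1 / (1 + (x * Real.sin φ ^ 2) * Real.sin θ) := by
    intro φ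
    have habs : |x * Real.sin φ ^ 2| < 1 := by
      calc |x * Real.sin φ ^ 2| ≤ |x| := by
            rw [abs_mul]
            apply mul_le_of_le_one_right (abs_nonneg x)
            rw [abs_of_nonneg (sq_nonneg _)]
            exact Real.sin_sq_le_one φ
        _ < 1 := hx
    have h1 : 1 - x ^ 2 * Real.sin φ ^ 4 = 1 - (x * Real.sin φ ^ 2) ^ 2 := by ring
    rw [h1, ← lemB habs]
    -- substitution θ ↦ π/2 - θ
    set t := x * Real.sin φ ^ 2 with htdef
    have h3 : ∫ θ in (0:ℝ)..(π/2), 1 / (1 + t * Real.cos θ)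
        = ∫ θ in (0:ℝ)..(π/2), (fun ϑ => 1 / (1 + t * Real.sin ϑ)) (π/2 - θ) := by
      apply intervalIntegral.integral_congr
      intro θ _
      simp [Real.sin_pi_div_two_sub]
    rw [h3, intervalIntegral.integral_comp_sub_left (fun ϑ => 1 / (1 + t * Real.sin ϑ)) (π/2)]
    norm_num
  -- rewrite both sides
  rw [intervalIntegral.integral_congr (fun φ _ => hL φ),
      intervalIntegral.integral_congr (fun φ _ => hR φ),
      intervalIntegral.integral_const_mul]
  have hcLHS : (π / 2) * ((2/π) * ∫ φ in (0:ℝ)..(π/2),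
      ∫ θ in (0:ℝ)..(π/2), 1 / (1 + (x * Real.sin φ) * Real.sin θ ^ 2))
      = ∫ φ in (0:ℝ)..(π/2), ∫ θ in (0:ℝ)..(π/2), 1 / (1 + (x * Real.sin φ) * Real.sin θ ^ 2) := by
    field_simp
  rw [hcLHS]
  -- Fubini
  have hcontf : Continuous (Function.uncurry fun u v : ℝ => 1 / (1 + (x * Real.sin u) * Real.sin v ^ 2)) := by
    apply Continuous.div continuous_const
    · exact continuous_const.add (((continuous_const.mul
        (Real.continuous_sin.comp continuous_fst)).mul
        ((Real.continuous_sin.comp continuous_snd).pow 2)))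
    · intro p
      have h1 : |Real.sin p.1 * Real.sin p.2 ^ 2| ≤ 1 := by
        rw [abs_mul]
        apply mul_le_one₀ (abs_sin_le_one' _) (abs_nonneg _)
        rw [abs_of_nonneg (sq_nonneg _)]
        exact Real.sin_sq_le_one p.2
      have := one_add_pos hx h1
      have heq : 1 + x * (Real.sin p.1 * Real.sin p.2 ^ 2)
          = 1 + x * Real.sin p.1 * Real.sin p.2 ^ 2 := by ring
      rw [heq] at this
      exact ne_of_gt this
  rw [swapInt _ hcontf (by positivity)]
  apply intervalIntegral.integral_congr
  intro φ _
  apply intervalIntegral.integral_congr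
  intro θ _
  ring_nf
end

section
/- Let 0 < x < 1 and let α, β ∈ [0, π/2] satisfy (1 + sin β)/(1 − sin β) = ((1 + sin α)/(1 − sin α)) · ((1 + x sin α)/(1 − x sin α))². Then (1 + 2x) ∫₀^α dθ/√(1 − x³((2+x)/(1+2x)) sin²θ) = ∫₀^β dθ/√(1 − x((2+x)/(1+2x))³ sin²θ). -/
open Real

noncomputable def ramS (x u : ℝ) : ℝ := u*(1+2*x+x^2*u^2)/(1+(2*x+x^2)*u^2)

lemma ramS_hasDerivAt (x u : ℝ) (h : (1:ℝ)+(2*x+x^2)*u^2 ≠ 0) :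
    HasDerivAt (ramS x)
      ((1-x^2*u^2)*(1+2*x-(2*x+x^2)*u^2)/(1+(2*x+x^2)*u^2)^2) u := by
  have h2 : HasDerivAt (fun v:ℝ => 1+2*x+x^2*v^2) (x^2*(2*u)) u := by
    have := ((hasDerivAt_pow 2 u).const_mul (x^2)).const_add (1+2*x)
    refine this.congr_deriv ?_
    push_cast; ring
  have h3 : HasDerivAt (fun v:ℝ => 1+(2*x+x^2)*v^2) ((2*x+x^2)*(2*u)) u := by
    have := ((hasDerivAt_pow 2 u).const_mul (2*x+x^2)).const_add (1:ℝ)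
    refine this.congr_deriv ?_
    push_cast; ring
  have h1 : HasDerivAt (fun v:ℝ => v*(1+2*x+x^2*v^2))
      (1*(1+2*x+x^2*u^2) + u*(x^2*(2*u))) u := (hasDerivAt_id u).mul h2
  have hd := h1.div h3 h
  refine hd.congr_deriv ?_
  field_simp
  ring

set_option maxHeartbeats 4000000 in
theorem ramanujan_elliptic_transformation (x α β : ℝ)
    (hx : x ∈ Set.Ioo (0:ℝ) 1)
    (hα : α ∈ Set.Icc 0 (π / 2)) (hβ : β ∈ Set.Ico 0 (π / 2))
    (hcond : (1 + Real.sin β) / (1 - Real.sin β)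
      = (1 + Real.sin α) / (1 - Real.sin α)
        * ((1 + x * Real.sin α) / (1 - x * Real.sin α)) ^ 2) :
    (1 + 2 * x) * ∫ θ in (0:ℝ)..α,
        1 / Real.sqrt (1 - x ^ 3 * ((2 + x) / (1 + 2 * x)) * Real.sin θ ^ 2)
      = ∫ θ in (0:ℝ)..β,
          1 / Real.sqrt (1 - x * ((2 + x) / (1 + 2 * x)) ^ 3 * Real.sin θ ^ 2) := by
  obtain ⟨hx0, hx1⟩ := hx
  obtain ⟨hα0, hα2⟩ := hα
  obtain ⟨hβ0, hβ2⟩ := hβ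
  have hpi : (0:ℝ) < π := Real.pi_pos
  have h12x : (0:ℝ) < 1+2*x := by linarith
  -- sin β bounds
  have hsβ1 : Real.sin β < 1 := by
    have := Real.strictMonoOn_sin (Set.mem_Icc.2 ⟨by linarith, hβ2.le⟩)
      (Set.mem_Icc.2 ⟨by linarith, le_refl _⟩) hβ2
    rwa [Real.sin_pi_div_two] at this
  have hsβ0 : 0 ≤ Real.sin β := Real.sin_nonneg_of_nonneg_of_le_pi hβ0 (by linarith)
  -- α < π/2
  have hαlt : α < π/2 := by
    rcases lt_or_eq_of_le hα2 with h | h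
    · exact h
    · exfalso
      rw [h, Real.sin_pi_div_two] at hcond
      have h0 : (1 + Real.sin β) / (1 - Real.sin β) = 0 := by rw [hcond]; norm_num
      have hpos : 0 < (1 + Real.sin β) / (1 - Real.sin β) :=
        div_pos (by linarith) (by linarith)
      rw [h0] at hpos
      exact lt_irrefl _ hpos
  have hsα1 : Real.sin α < 1 := by
    have := Real.strictMonoOn_sin (Set.mem_Icc.2 ⟨by linarith, by linarith⟩)
      (Set.mem_Icc.2 ⟨by linarith, le_refl _⟩) hαlt
    rwa [Real.sin_pi_div_two] at this
  have hsα0 : 0 ≤ Real.sin α := Real.sin_nonneg_of_nonneg_of_le_pi hα0 (by linarith)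
  -- derive sin β = ramS x (sin α)
  have hd1 : (1:ℝ) - Real.sin β ≠ 0 := by linarith
  have hd2 : (1:ℝ) - Real.sin α ≠ 0 := by linarith
  have hd3 : (1:ℝ) - x*Real.sin α ≠ 0 := by nlinarith
  have hDα : (0:ℝ) < 1+(2*x+x^2)*(Real.sin α)^2 := by positivity
  have hcond' : (1 + Real.sin β) * ((1 - Real.sin α) * (1 - x*Real.sin α)^2)
      = (1 - Real.sin β) * ((1 + Real.sin α) * (1 + x*Real.sin α)^2) := by
    field_simp at hcond
    rw [eq_div_iff (pow_ne_zero 2 (by rw [mul_comm]; exact hd3))] at hcond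
    linarith [hcond]
  have hbD : Real.sin β * (1+(2*x+x^2)*(Real.sin α)^2)
      = Real.sin α * (1+2*x+x^2*(Real.sin α)^2) := by nlinarith [hcond']
  have hsinβ : ramS x (Real.sin α) = Real.sin β := by
    unfold ramS
    rw [div_eq_iff hDα.ne']
    linarith [hbD]
  -- moduli p, q
  set p := x ^ 3 * ((2 + x) / (1 + 2 * x)) with hp_def
  set q := x * ((2 + x) / (1 + 2 * x)) ^ 3 with hq_def
  have hp0 : 0 ≤ p := by rw [hp_def]; positivity
  have hq0 : 0 ≤ q := by rw [hq_def]; positivity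
  have hp1 : p < 1 := by
    rw [hp_def, mul_div_assoc', div_lt_one h12x]
    have key : 1+2*x - x^3*(2+x) = (1-x)*(1+x)^3 := by ring
    have pos := mul_pos (by linarith : (0:ℝ) < 1-x)
      (pow_pos (by linarith : (0:ℝ) < 1+x) 3)
    linarith
  have hq1 : q < 1 := by
    rw [hq_def, div_pow, mul_div_assoc', div_lt_one (by positivity)]
    have key : (1+2*x)^3 - x*(2+x)^3 = (1-x)^3*(1+x) := by ring
    have pos := mul_pos (pow_pos (by linarith : (0:ℝ) < 1-x) 3)
      (by linarith : (0:ℝ) < 1+x)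
    linarith
  have hqb : ∀ θ : ℝ, 0 < 1 - q * Real.sin θ ^ 2 := by
    intro θ
    nlinarith [Real.sin_sq_le_one θ, sq_nonneg (Real.sin θ)]
  have hpb : ∀ θ : ℝ, 0 < 1 - p * Real.sin θ ^ 2 := by
    intro θ
    nlinarith [Real.sin_sq_le_one θ, sq_nonneg (Real.sin θ)]
  -- the substitution function and its derivative
  set f : ℝ → ℝ := fun θ => Real.arcsin (ramS x (Real.sin θ)) with hf_def
  set F : ℝ → ℝ := fun θ =>
    (1+2*x) * Real.sqrt (1 - q * (ramS x (Real.sin θ))^2) / Real.sqrt (1 - p * (Real.sin θ)^2)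
    with hF_def
  set g : ℝ → ℝ := fun θ => 1 / Real.sqrt (1 - q * Real.sin θ ^ 2) with hg_def
  -- continuity facts
  have hDpos : ∀ u : ℝ, (0:ℝ) < 1+(2*x+x^2)*u^2 := by intro u; positivity
  have hScont : Continuous (ramS x) := by
    unfold ramS
    exact (continuous_id.mul (continuous_const.add
        (continuous_const.mul (continuous_pow 2)))).div
      (continuous_const.add (continuous_const.mul (continuous_pow 2)))
      (fun u => (hDpos u).ne')
  have hgcont : Continuous g := by
    rw [hg_def]
    exact continuous_const.div
      ((continuous_const.sub (continuous_const.mul (Real.continuous_sin.pow 2))).sqrt)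
      (fun θ => (Real.sqrt_pos.2 (hqb θ)).ne')
  have hFcont : Continuous F := by
    rw [hF_def]
    exact (continuous_const.mul ((continuous_const.sub
        (continuous_const.mul ((hScont.comp Real.continuous_sin).pow 2))).sqrt)).div
      ((continuous_const.sub (continuous_const.mul (Real.continuous_sin.pow 2))).sqrt)
      (fun θ => (Real.sqrt_pos.2 (hpb θ)).ne')
  -- derivative of f on [0, α]
  have hderiv : ∀ θ ∈ Set.uIcc (0:ℝ) α, HasDerivAt f (F θ) θ := by
    intro θ hθ
    rw [Set.uIcc_of_le hα0] at hθ
    obtain ⟨hθ0, hθα⟩ := hθ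
    have hcos : 0 < Real.cos θ :=
      Real.cos_pos_of_mem_Ioo ⟨by linarith, by linarith⟩
    set u := Real.sin θ with hu_def
    have hu0 : 0 ≤ u := Real.sin_nonneg_of_nonneg_of_le_pi hθ0 (by linarith)
    have hu1 : u ≤ 1 := Real.sin_le_one θ
    have hu1' : u < 1 := by
      nlinarith [Real.sin_sq_add_cos_sq θ]
    have hDu : (0:ℝ) < 1+(2*x+x^2)*u^2 := hDpos u
    have hu2 : u^2 ≤ 1 := by nlinarith
    have hxu : (0:ℝ) < 1 - x^2*u^2 := by nlinarith [sq_nonneg u, mul_le_of_le_one_right (sq_nonneg x) hu2]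
    have hKu : (0:ℝ) < 1+2*x-(2*x+x^2)*u^2 := by
      have h2 : (2*x+x^2)*u^2 ≤ 2*x+x^2 := mul_le_of_le_one_right (by nlinarith) hu2
      nlinarith
    have hpu : (0:ℝ) < 1 - p*u^2 := hpb θ
    have hc2 : Real.cos θ ^ 2 = 1 - u^2 := Real.cos_sq' θ
    have h1S : 1 - (ramS x u)^2
        = (Real.cos θ * (1-x^2*u^2) / (1+(2*x+x^2)*u^2))^2 := by
      have e1 : 1 - (ramS x u)^2
          = (1-u^2) * ((1-x^2*u^2)/(1+(2*x+x^2)*u^2))^2 := by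
        unfold ramS
        field_simp
        ring
      rw [e1, ← hc2]
      ring
    have hS2 : (ramS x u)^2 < 1 := by
      have : 0 < (Real.cos θ * (1-x^2*u^2) / (1+(2*x+x^2)*u^2))^2 := by positivity
      nlinarith [h1S]
    have hSne1 : ramS x u ≠ 1 := by intro h; rw [h] at hS2; norm_num at hS2
    have hSne1' : ramS x u ≠ -1 := by
      intro h; rw [h] at hS2; norm_num at hS2
    have sqrtA : Real.sqrt (1 - (ramS x u)^2)
        = Real.cos θ * (1-x^2*u^2) / (1+(2*x+x^2)*u^2) := by
      rw [h1S, Real.sqrt_sq (by positivity)]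
    have e2 : 1 - q * (ramS x u)^2
        = (1-p*u^2) * ((1+2*x-(2*x+x^2)*u^2)/((1+2*x)*(1+(2*x+x^2)*u^2)))^2 := by
      rw [hp_def, hq_def]
      unfold ramS
      field_simp
      ring
    have sqrtB : Real.sqrt (1 - q * (ramS x u)^2)
        = Real.sqrt (1-p*u^2) * ((1+2*x-(2*x+x^2)*u^2)/((1+2*x)*(1+(2*x+x^2)*u^2))) := by
      rw [e2, Real.sqrt_mul hpu.le, Real.sqrt_sq (by positivity)]
    have hsin : HasDerivAt Real.sin (Real.cos θ) θ := Real.hasDerivAt_sin θ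
    have hSd := ramS_hasDerivAt x u hDu.ne'
    have hcomp1 : HasDerivAt (fun t => ramS x (Real.sin t))
        ((1-x^2*u^2)*(1+2*x-(2*x+x^2)*u^2)/(1+(2*x+x^2)*u^2)^2 * Real.cos θ) θ :=
      by exact hSd.comp θ hsin
    have harc : HasDerivAt Real.arcsin (1 / Real.sqrt (1 - (ramS x u)^2)) (ramS x u) :=
      Real.hasDerivAt_arcsin hSne1' hSne1
    have hcomp : HasDerivAt f
        (1 / Real.sqrt (1 - (ramS x u)^2) *
          ((1-x^2*u^2)*(1+2*x-(2*x+x^2)*u^2)/(1+(2*x+x^2)*u^2)^2 * Real.cos θ)) θ :=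
      by exact harc.comp θ hcomp1
    convert hcomp using 1
    rw [hF_def]
    simp only
    rw [← hu_def, sqrtA, sqrtB]
    have hsq : Real.sqrt (1-p*u^2) ≠ 0 := (Real.sqrt_pos.2 hpu).ne'
    field_simp
  -- the substitution
  have hsub := intervalIntegral.integral_comp_smul_deriv hderiv hFcont.continuousOn hgcont
  have hf0 : f 0 = 0 := by
    rw [hf_def]
    simp only
    rw [Real.sin_zero]
    unfold ramS
    norm_num
  have hfα : f α = β := by
    rw [hf_def]
    simp only
    rw [hsinβ]
    exact Real.arcsin_sin (by linarith) (by linarith)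
  rw [hf0, hfα] at hsub
  -- pointwise identity on [0, α]
  have hcongr : Set.EqOn (fun θ => (1+2*x) * (1 / Real.sqrt (1 - p * Real.sin θ ^ 2)))
      (fun θ => F θ • (g ∘ f) θ) (Set.uIcc (0:ℝ) α) := by
    intro θ hθ
    rw [Set.uIcc_of_le hα0] at hθ
    obtain ⟨hθ0, hθα⟩ := hθ
    have hcos : 0 < Real.cos θ :=
      Real.cos_pos_of_mem_Ioo ⟨by linarith, by linarith⟩
    set u := Real.sin θ with hu_def
    have hu0 : 0 ≤ u := Real.sin_nonneg_of_nonneg_of_le_pi hθ0 (by linarith)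
    have hu1' : u < 1 := by nlinarith [Real.sin_sq_add_cos_sq θ]
    have hDu : (0:ℝ) < 1+(2*x+x^2)*u^2 := hDpos u
    have hu2 : u^2 ≤ 1 := by nlinarith
    have hxu : (0:ℝ) < 1 - x^2*u^2 := by nlinarith [sq_nonneg u, sq_nonneg x, mul_le_of_le_one_right (sq_nonneg x) hu2]
    have hc2 : Real.cos θ ^ 2 = 1 - u^2 := Real.cos_sq' θ
    have h1S : 0 ≤ 1 - (ramS x u)^2 := by
      have e1 : 1 - (ramS x u)^2
          = (1-u^2) * ((1-x^2*u^2)/(1+(2*x+x^2)*u^2))^2 := by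
        unfold ramS
        field_simp
        ring
      rw [e1]
      exact mul_nonneg (by nlinarith) (sq_nonneg _)
    have hSb1 : ramS x u ≤ 1 := by nlinarith [h1S, sq_nonneg (ramS x u - 1)]
    have hSb2 : -1 ≤ ramS x u := by nlinarith [h1S, sq_nonneg (ramS x u + 1)]
    have hsf : Real.sin (f θ) = ramS x u := by
      rw [hf_def]
      simp only
      exact Real.sin_arcsin hSb2 hSb1
    have hqS : 0 < 1 - q * (ramS x u)^2 := by nlinarith [h1S, sq_nonneg (ramS x u), mul_le_of_le_one_right hq0 (by nlinarith [h1S] : (ramS x u)^2 ≤ 1)]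
    simp only [Function.comp, hg_def, hF_def]
    rw [hsf, ← hu_def]
    have hsq1 : Real.sqrt (1 - q * (ramS x u)^2) ≠ 0 := (Real.sqrt_pos.2 hqS).ne'
    have hsq2 : Real.sqrt (1 - p * u^2) ≠ 0 := (Real.sqrt_pos.2 (hpb θ)).ne'
    rw [smul_eq_mul]
    field_simp
  calc (1 + 2 * x) * ∫ θ in (0:ℝ)..α, 1 / Real.sqrt (1 - p * Real.sin θ ^ 2)
      = ∫ θ in (0:ℝ)..α, (1+2*x) * (1 / Real.sqrt (1 - p * Real.sin θ ^ 2)) := by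
        rw [intervalIntegral.integral_const_mul]
    _ = ∫ θ in (0:ℝ)..α, F θ • (g ∘ f) θ := intervalIntegral.integral_congr hcongr
    _ = ∫ θ in (0:ℝ)..β, g θ := hsub
    _ = ∫ θ in (0:ℝ)..β, 1 / Real.sqrt (1 - q * Real.sin θ ^ 2) := rfl
end

section
/- If v = √2·x/√(1 + x⁴) with x ∈ [0, 1], then ∫₀^v dt/√(1 − t⁴) = √2 · ∫₀^x dt/√(1 + t⁴). -/
open Real

noncomputable def fag (u : ℝ) : ℝ := Real.sqrt 2 * u / Real.sqrt (1 + u ^ 4)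

noncomputable def fag' (u : ℝ) : ℝ :=
  Real.sqrt 2 * (1 - u ^ 4) / (Real.sqrt (1 + u ^ 4)) ^ 3

lemma hasDerivAt_fag (u : ℝ) : HasDerivAt fag (fag' u) u := by
  have h1 : (0:ℝ) < 1 + u ^ 4 := by positivity
  have hs0 : (0:ℝ) < Real.sqrt (1 + u ^ 4) := Real.sqrt_pos.2 h1
  have hs : Real.sqrt (1 + u ^ 4) ≠ 0 := hs0.ne'
  have hd : HasDerivAt (fun y : ℝ => 1 + y ^ 4) (4 * u ^ 3) u := by
    simpa using (hasDerivAt_pow 4 u).const_add 1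
  have hsq : HasDerivAt (fun y : ℝ => Real.sqrt (1 + y ^ 4))
      ((4 * u ^ 3) / (2 * Real.sqrt (1 + u ^ 4))) u := hd.sqrt h1.ne'
  have hnum : HasDerivAt (fun y : ℝ => Real.sqrt 2 * y) (Real.sqrt 2) u := by
    simpa using (hasDerivAt_id u).const_mul (Real.sqrt 2)
  have H := hnum.div hsq hs
  refine H.congr_deriv ?_
  symm
  have hs2 : Real.sqrt (1 + u ^ 4) ^ 2 = 1 + u ^ 4 := Real.sq_sqrt h1.le
  unfold fag'
  set s := Real.sqrt (1 + u ^ 4) with hsdef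
  field_simp
  linear_combination (-2:ℝ) * hs2

lemma fag_sq (u : ℝ) (hu0 : 0 ≤ u) (hu1 : u ≤ 1) :
    Real.sqrt (1 - (fag u) ^ 4) = (1 - u ^ 4) / (1 + u ^ 4) := by
  have h1 : (0:ℝ) < 1 + u ^ 4 := by positivity
  have hs2 : Real.sqrt (1 + u ^ 4) ^ 2 = 1 + u ^ 4 := Real.sq_sqrt h1.le
  have h2 : Real.sqrt 2 ^ 2 = 2 := Real.sq_sqrt (by norm_num)
  have hu4 : u ^ 4 ≤ 1 := pow_le_one₀ hu0 hu1
  have key : 1 - (fag u) ^ 4 = ((1 - u ^ 4) / (1 + u ^ 4)) ^ 2 := by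
    unfold fag
    have hs4 : Real.sqrt (1 + u ^ 4) ^ 4 = (1 + u ^ 4) ^ 2 := by
      rw [show (4:ℕ) = 2 * 2 from rfl, pow_mul, hs2]
    have h24 : Real.sqrt 2 ^ 4 = (4:ℝ) := by
      rw [show (4:ℕ) = 2 * 2 from rfl, pow_mul, h2]; norm_num
    field_simp
    rw [hs4, h24]
    ring
  rw [key, Real.sqrt_sq (div_nonneg (by linarith) h1.le)]

lemma continuous_fag' : Continuous fag' := by
  apply Continuous.div
  · continuity
  · continuity
  · intro u
    exact pow_ne_zero _ (Real.sqrt_pos.2 (by positivity)).ne'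

lemma fag_one : fag 1 = 1 := by
  have : Real.sqrt (1 + 1 ^ 4) = Real.sqrt 2 := by norm_num
  rw [fag, this, mul_one, div_self (Real.sqrt_pos.2 (by norm_num)).ne']

lemma fag_mem (u : ℝ) (hu0 : 0 ≤ u) (hu1 : u ≤ 1) : fag u ∈ Set.Icc (0:ℝ) 1 := by
  have h1 : (0:ℝ) < 1 + u ^ 4 := by positivity
  have hs0 : (0:ℝ) < Real.sqrt (1 + u ^ 4) := Real.sqrt_pos.2 h1
  constructor
  · exact div_nonneg (mul_nonneg (Real.sqrt_nonneg 2) hu0) hs0.le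
  · rw [fag, div_le_one hs0]
    have : Real.sqrt 2 * u = Real.sqrt (2 * u ^ 2) := by
      rw [Real.sqrt_mul (by norm_num), Real.sqrt_sq hu0]
    rw [this]
    exact Real.sqrt_le_sqrt (by nlinarith [sq_nonneg (1 - u ^ 2)])

lemma key_lt (x : ℝ) (hx0 : 0 ≤ x) (hx1 : x < 1) :
    ∫ t in (0:ℝ)..(fag x), 1 / Real.sqrt (1 - t ^ 4)
      = Real.sqrt 2 * ∫ t in (0:ℝ)..x, 1 / Real.sqrt (1 + t ^ 4) := by
  have huIcc : Set.uIcc (0:ℝ) x = Set.Icc 0 x := Set.uIcc_of_le hx0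
  have h0 : fag 0 = 0 := by simp [fag]
  have hg : ContinuousOn (fun t => 1 / Real.sqrt (1 - t ^ 4))
      (fag '' Set.uIcc (0:ℝ) x) := by
    intro t ht
    obtain ⟨u, hu, rfl⟩ := ht
    rw [huIcc] at hu
    have hu1 : u < 1 := lt_of_le_of_lt hu.2 hx1
    have hpos : (0:ℝ) < Real.sqrt (1 - (fag u) ^ 4) := by
      rw [fag_sq u hu.1 hu1.le]
      have : (0:ℝ) < 1 - u ^ 4 := by nlinarith [pow_lt_one₀ hu.1 hu1 (n := 4) (by norm_num)]
      positivity
    have hca : ContinuousAt (fun t : ℝ => 1 / Real.sqrt (1 - t ^ 4)) (fag u) := by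
      apply ContinuousAt.div continuousAt_const
      · exact (Real.continuous_sqrt.comp (by continuity)).continuousAt
      · exact hpos.ne'
    exact hca.continuousWithinAt
  have hsub := intervalIntegral.integral_comp_smul_deriv' (a := (0:ℝ)) (b := x)
    (f := fag) (f' := fag') (g := fun t => 1 / Real.sqrt (1 - t ^ 4))
    (fun u _ => hasDerivAt_fag u) continuous_fag'.continuousOn hg
  rw [h0] at hsub
  rw [← hsub, ← intervalIntegral.integral_const_mul]
  apply intervalIntegral.integral_congr
  intro u hu
  rw [huIcc] at hu
  have hu1 : u < 1 := lt_of_le_of_lt hu.2 hx1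
  have h1 : (0:ℝ) < 1 + u ^ 4 := by positivity
  have h14 : (0:ℝ) < 1 - u ^ 4 := by
    nlinarith [pow_lt_one₀ hu.1 hu1 (n := 4) (by norm_num)]
  have hs0 : (0:ℝ) < Real.sqrt (1 + u ^ 4) := Real.sqrt_pos.2 h1
  have hs2 : Real.sqrt (1 + u ^ 4) ^ 2 = 1 + u ^ 4 := Real.sq_sqrt h1.le
  have hfs := fag_sq u hu.1 hu1.le
  simp only [smul_eq_mul, Function.comp]
  rw [hfs, fag']
  rw [div_div_eq_mul_div, one_mul, mul_one_div]
  field_simp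
  linear_combination (-1:ℝ) * hs2

lemma g1_integrable : IntervalIntegrable (fun t : ℝ => 1 / Real.sqrt (1 - t ^ 4))
    MeasureTheory.volume 0 1 := by
  have hmaj : IntervalIntegrable (fun t : ℝ => (1 - t) ^ (-(1/2) : ℝ))
      MeasureTheory.volume 0 1 := by
    have := (intervalIntegral.intervalIntegrable_rpow' (a := (0:ℝ)) (b := 1) (r := -(1/2))
      (by norm_num)).comp_sub_left 1
    simpa using this.symm
  apply hmaj.mono_fun
  · apply Measurable.aestronglyMeasurable
    fun_prop
  · rw [Filter.EventuallyLE, MeasureTheory.ae_restrict_iff' measurableSet_uIoc]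
    refine Filter.Eventually.of_forall (fun t ht => ?_)
    rw [Set.uIoc_of_le (by norm_num : (0:ℝ) ≤ 1)] at ht
    obtain ⟨ht0, ht1⟩ := ht
    have h1t : (0:ℝ) ≤ 1 - t := by linarith
    have hrpow : (0:ℝ) ≤ (1 - t) ^ (-(1/2) : ℝ) := Real.rpow_nonneg h1t _
    have hLnn : (0:ℝ) ≤ 1 / Real.sqrt (1 - t ^ 4) := by positivity
    rw [Real.norm_eq_abs, Real.norm_eq_abs, abs_of_nonneg hLnn, abs_of_nonneg hrpow]
    rcases eq_or_lt_of_le ht1 with h | h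
    · subst h
      simp [hrpow]
    · have h1t' : (0:ℝ) < 1 - t := by linarith
      rw [Real.rpow_neg h1t, ← Real.sqrt_eq_rpow]
      have hle : 1 - t ≤ 1 - t ^ 4 := by nlinarith [pow_le_one₀ ht0.le ht1 (n := 3), ht0.le]
      rw [one_div]
      exact inv_anti₀ (Real.sqrt_pos.2 h1t') (Real.sqrt_le_sqrt hle)

lemma g2_cont : Continuous (fun t : ℝ => 1 / Real.sqrt (1 + t ^ 4)) := by
  apply Continuous.div continuous_const (Real.continuous_sqrt.comp (by continuity))
  intro t
  exact (Real.sqrt_pos.2 (by positivity)).ne'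

theorem lemniscate_fagnano (x : ℝ) (hx : x ∈ Set.Icc (0:ℝ) 1) :
    ∫ t in (0:ℝ)..(Real.sqrt 2 * x / Real.sqrt (1 + x ^ 4)),
        1 / Real.sqrt (1 - t ^ 4)
      = Real.sqrt 2 * ∫ t in (0:ℝ)..x, 1 / Real.sqrt (1 + t ^ 4) := by
  obtain ⟨hx0, hx1⟩ := hx
  show (∫ t in (0:ℝ)..(fag x), 1 / Real.sqrt (1 - t ^ 4)) = _
  rcases lt_or_eq_of_le hx1 with h | h
  · exact key_lt x hx0 h
  · subst h
    -- limit argument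
    set Φ : ℝ → ℝ := fun y => ∫ t in (0:ℝ)..(fag y), 1 / Real.sqrt (1 - t ^ 4) with hΦ
    set Ψ : ℝ → ℝ := fun y => Real.sqrt 2 * ∫ t in (0:ℝ)..y, 1 / Real.sqrt (1 + t ^ 4) with hΨ
    have hH : ContinuousOn (fun v => ∫ t in (0:ℝ)..v, 1 / Real.sqrt (1 - t ^ 4))
        (Set.uIcc (0:ℝ) 1) :=
      intervalIntegral.continuousOn_primitive_interval' g1_integrable Set.left_mem_uIcc
    have huIcc : Set.uIcc (0:ℝ) 1 = Set.Icc 0 1 := Set.uIcc_of_le (by norm_num)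
    have hfagc : ContinuousAt fag 1 := (hasDerivAt_fag 1).continuousAt
    have hfagtendsto : Filter.Tendsto fag (nhdsWithin 1 (Set.Iio 1))
        (nhdsWithin 1 (Set.uIcc (0:ℝ) 1)) := by
      rw [tendsto_nhdsWithin_iff]
      constructor
      · have h := hfagc.continuousWithinAt (s := Set.Iio 1)
        rw [ContinuousWithinAt, fag_one] at h
        exact h
      · filter_upwards [Ioo_mem_nhdsLT_of_mem (a := (0:ℝ)) (Set.mem_Ioc.2 ⟨by norm_num, le_refl (1:ℝ)⟩)]
          with y hy
        rw [huIcc]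
        exact fag_mem y hy.1.le hy.2.le
    have hΦtendsto : Filter.Tendsto Φ (nhdsWithin 1 (Set.Iio 1)) (nhds (Φ 1)) := by
      have h1mem : (1:ℝ) ∈ Set.uIcc (0:ℝ) 1 := Set.right_mem_uIcc
      have := (hH 1 h1mem).tendsto.comp hfagtendsto
      simpa [hΦ, fag_one, Function.comp_def] using this
    have hΨtendsto : Filter.Tendsto Ψ (nhdsWithin 1 (Set.Iio 1)) (nhds (Ψ 1)) := by
      apply Filter.Tendsto.mono_left _ nhdsWithin_le_nhds
      exact (Continuous.tendsto (by
        exact continuous_const.mul (intervalIntegral.continuous_primitive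
          (fun a b => g2_cont.intervalIntegrable a b) 0)) 1)
    have heq : Φ =ᶠ[nhdsWithin 1 (Set.Iio 1)] Ψ := by
      filter_upwards [Ioo_mem_nhdsLT_of_mem (a := (0:ℝ)) (Set.mem_Ioc.2 ⟨by norm_num, le_refl (1:ℝ)⟩)]
        with y hy
      exact key_lt y hy.1.le hy.2
    have hΨtendsto' : Filter.Tendsto Ψ (nhdsWithin 1 (Set.Iio 1)) (nhds (Φ 1)) :=
      hΦtendsto.congr' heq
    exact tendsto_nhds_unique hΨtendsto' hΨtendsto
end
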